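/- arXiv:2007.13901 — 11 statements merged into one kernel-verified Lean document; each statement's English description precedes it below -/
import Mathlib

section
/- A digraph D of order n with at least one source vertex has a closed dominating walk if and only if D has exactly one source vertex v and v has out-degree n-1. -/
variable {V : Type*}

/-- `S` dominates the digraph with arc relation `A`: every vertex is in `S`
or has an in-neighbour in `S`. -/
def Dom (A : V → V → Prop) (S : Set V) : Prop :=
  ∀ v, v ∈ S ∨ ∃ u ∈ S, A u v

/-- `l` (a nonempty list of visited vertices) is a closed directed walk:
consecutive vertices are joined by arcs and there is an arc from the last
vertex back to the first (or the walk is the trivial walk at one vertex). -/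
def IsClosedWalk (A : V → V → Prop) (l : List V) : Prop :=
  l ≠ [] ∧ l.Chain' A ∧
    (l.length = 1 ∨ ∀ a b, l.head? = some a → l.getLast? = some b → A b a)

/-- The length (number of arcs, with multiplicity) of the closed walk with
vertex list `l`. -/
def walkLength (l : List V) : ℕ := if l.length = 1 then 0 else l.length

/-- `l` is a closed dominating walk. -/
def IsCDW (A : V → V → Prop) (l : List V) : Prop :=
  IsClosedWalk A l ∧ Dom A {v | v ∈ l}

/-- The digraph has a closed dominating walk. -/
def HasCDW (A : V → V → Prop) : Prop := ∃ l, IsCDW A l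

/-- The watchman number: minimum length of a closed dominating walk. -/
noncomputable def watchman (A : V → V → Prop) : ℕ :=
  sInf {n | ∃ l, IsCDW A l ∧ walkLength l = n}

/-- A tournament: loopless, and exactly one arc between any two distinct vertices. -/
def IsTournament (A : V → V → Prop) : Prop :=
  (∀ v, ¬ A v v) ∧ ∀ u v : V, u ≠ v → (A u v ↔ ¬ A v u)

/-- The subdigraph induced on `S` is strongly connected. -/
def StronglyConnectedOn (A : V → V → Prop) (S : Set V) : Prop :=
  ∀ u ∈ S, ∀ v ∈ S, Relation.ReflTransGen (fun a b => a ∈ S ∧ b ∈ S ∧ A a b) u v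

/-- The maximal strongly connected component containing `v`. -/
def StrongComp (A : V → V → Prop) (v : V) : Set V :=
  {u | Relation.ReflTransGen A v u ∧ Relation.ReflTransGen A u v}

/-- The domination number. -/
noncomputable def domNum (A : V → V → Prop) : ℕ :=
  sInf {n | ∃ S : Set V, S.ncard = n ∧ Dom A S}

/-- The total domination number. -/
noncomputable def totalDomNum (A : V → V → Prop) : ℕ :=
  sInf {n | ∃ S : Set V, S.ncard = n ∧ ∀ v, ∃ u ∈ S, u ≠ v ∧ A u v}

/-- An orientation of a complete multipartite graph whose parts are the fibres
of `P`: arcs only between different parts, and exactly one arc between any two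
vertices in different parts. -/
def IsCMPOrientation {ι : Type*} (A : V → V → Prop) (P : V → ι) : Prop :=
  (∀ u v, A u v → P u ≠ P v) ∧ ∀ u v, P u ≠ P v → (A u v ↔ ¬ A v u)

theorem stmt1 [Fintype V] (A : V → V → Prop)
    (hsrc : ∃ v : V, ∀ u, ¬ A u v) :
    HasCDW A ↔
      ∃ v : V, (∀ u, ¬ A u v) ∧ (∀ w, (∀ u, ¬ A u w) → w = v) ∧
        {u | A v u}.ncard = Fintype.card V - 1 := by
  obtain ⟨v, hv⟩ := hsrc
  constructor
  · rintro ⟨l, ⟨hne, hchain, hcl⟩, hdom⟩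
    -- v is in l
    have hvl : v ∈ l := by
      rcases hdom v with h | ⟨u, _, hA⟩
      · exact h
      · exact absurd hA (hv u)
    -- l has length 1
    have hlen : l.length = 1 := by
      by_contra hl1
      have hcl' := hcl.resolve_left hl1
      obtain ⟨⟨i, hi⟩, rfl⟩ := List.mem_iff_get.mp hvl
      rcases Nat.eq_zero_or_pos i with rfl | hpos
      · have hh : l.head? = some (l.get ⟨0, hi⟩) := by
          cases l with
          | nil => simp at hne
          | cons a t => simp
        have hlast : l.getLast? = some (l.getLast hne) := List.getLast?_eq_getLast hne
        exact hv _ (hcl' _ _ hh hlast)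
      · have hi' : i - 1 < l.length - 1 := by omega
        have := List.isChain_iff_getElem.mp hchain (i-1) (by omega)
        have heq : i - 1 + 1 = i := by omega
        simp only [heq] at this
        exact hv _ this
    obtain ⟨w, rfl⟩ := List.length_eq_one_iff.mp hlen
    have hw : v = w := by simpa using hvl
    rw [hw] at hv
    refine ⟨w, hv, ?_, ?_⟩
    · intro x hx
      rcases hdom x with h | ⟨u, hu, hA⟩
      · simpa using h
      · have huw : u = w := by simpa using hu
        exact absurd (huw ▸ hA) (hx w)
    · have hset : {u | A w u} = Set.univ \ {w} := by
        ext u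
        simp only [Set.mem_setOf_eq, Set.mem_diff, Set.mem_univ, Set.mem_singleton_iff,
          true_and]
        constructor
        · intro hA
          rintro rfl
          exact hv u hA
        · intro hu
          rcases hdom u with h | ⟨x, hx, hA⟩
          · exact absurd (by simpa using h) hu
          · have hxw : x = w := by simpa using hx
            exact hxw ▸ hA
      rw [hset, Set.ncard_diff (by simp), Set.ncard_univ, Set.ncard_singleton,
        Nat.card_eq_fintype_card]
  · rintro ⟨w, hw, _, hcard⟩
    have hwv : w = w := rfl
    have hset : {u | A w u} = Set.univ \ {w} := by
      have hsub : {u | A w u} ⊆ Set.univ \ {w} := by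
        intro u hu
        refine ⟨trivial, ?_⟩
        rintro rfl
        exact hw u hu
      apply Set.eq_of_subset_of_ncard_le hsub
      rw [hcard, Set.ncard_diff (by simp), Set.ncard_univ, Set.ncard_singleton,
        Nat.card_eq_fintype_card]
    refine ⟨[w], ⟨by simp, List.isChain_singleton _, Or.inl rfl⟩, ?_⟩
    intro u
    by_cases hu : u = w
    · subst hu; exact Or.inl (by simp)
    · refine Or.inr ⟨w, by simp, ?_⟩
      have : u ∈ Set.univ \ {w} := ⟨trivial, hu⟩
      rw [← hset] at this
      exact this
end

section
/- Let D be an orientation of a complete multipartite graph with parts X_1,...,X_k (k ≥ 2). If v ∈ X_i is a source vertex, then D has a closed dominating walk if and only if |X_i| = 1. -/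
variable {V : Type*}

lemma chain'_mem_aux {A : V → V → Prop} : ∀ {l : List V} {x : V}, l.Chain' A → x ∈ l →
    l.head? = some x ∨ ∃ u ∈ l, A u x := by
  intro l
  induction l with
  | nil => simp
  | cons a t ih =>
    intro x hc hx
    rcases List.mem_cons.1 hx with rfl | hx
    · exact Or.inl rfl
    · rcases ih hc.tail hx with h | ⟨u, hu, hA⟩
      · exact Or.inr ⟨a, List.mem_cons_self, (List.isChain_cons.1 hc).1 x h⟩
      · exact Or.inr ⟨u, List.mem_cons_of_mem _ hu, hA⟩

theorem stmt2 [Fintype V] {ι : Type*} [Fintype ι] (A : V → V → Prop) (P : V → ι)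
    (hor : IsCMPOrientation A P) (hk : 2 ≤ Fintype.card ι)
    (hsurj : Function.Surjective P) (v : V) (hv : ∀ u, ¬ A u v) :
    HasCDW A ↔ {u | P u = P v} = {v} := by
  constructor
  · rintro ⟨l, ⟨hne, hchain, hclosed⟩, hdom⟩
    -- v must be in l
    have hvl : v ∈ l := by
      rcases hdom v with h | ⟨u, _, hA⟩
      · exact h
      · exact absurd hA (hv u)
    have hhead : l.head? = some v := by
      rcases chain'_mem_aux hchain hvl with h | ⟨u, _, hA⟩
      · exact h
      · exact absurd hA (hv u)
    have hlen : l.length = 1 := by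
      rcases hclosed with h | h
      · exact h
      · have hlast : l.getLast? = some (l.getLast hne) := List.getLast?_eq_getLast hne
        exact absurd (h v (l.getLast hne) hhead hlast) (hv _)
    -- so l = [v]
    have hl : l = [v] := by
      rcases l with _ | ⟨a, t⟩
      · exact absurd rfl hne
      · have : a = v := by simpa using hhead
        subst this
        have : t = [] := by simpa using hlen
        rw [this]
    subst hl
    ext w
    simp only [Set.mem_setOf_eq, Set.mem_singleton_iff]
    constructor
    · intro hw
      rcases hdom w with h | ⟨u, hu, hA⟩
      · simpa using h
      · have he : u = v := by simpa using hu
        rw [he] at hA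
        exact absurd hw.symm (hor.1 v w hA)
    · rintro rfl; rfl
  · intro hset
    refine ⟨[v], ⟨by simp, List.isChain_singleton _, Or.inl rfl⟩, ?_⟩
    intro u
    by_cases h : P u = P v
    · left
      have : u ∈ ({v} : Set V) := hset ▸ h
      simpa using this
    · right
      refine ⟨v, by simp, ?_⟩
      exact ((hor.2 v u (fun he => h he.symm)).2 (hv u))
end

section
/- Let D be an orientation of a complete bipartite graph with parts A and B such that every vertex has in-degree at least 1. If there exists U ⊆ B such that the subdigraph induced by A ∪ U is strongly connected, then D has a closed dominating walk. -/
variable {V : Type*}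

private lemma getLast_cons_append_eq {a b : V} :
    ∀ (l₁ : List V) (l₂ : List V), (a :: l₁).getLast (List.cons_ne_nil _ _) = b →
      (a :: (l₁ ++ l₂)).getLast (List.cons_ne_nil _ _) =
        (b :: l₂).getLast (List.cons_ne_nil _ _) := by
  intro l₁
  induction l₁ generalizing a with
  | nil => intro l₂ h; simp at h; subst h; rfl
  | cons c t ih =>
    intro l₂ h
    rw [List.getLast_cons (by simp)] at h ⊢
    exact ih (a := c) l₂ h

private lemma chain_append_chain {r : V → V → Prop} (l₂ : List V) :
    ∀ (l₁ : List V) (a b : V), List.Chain r a l₁ →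
      (a :: l₁).getLast (List.cons_ne_nil _ _) = b → List.Chain r b l₂ →
      List.Chain r a (l₁ ++ l₂) := by
  intro l₁
  induction l₁ generalizing l₂ with
  | nil => intro a b _ hlast h2; simp at hlast; subst hlast; simpa using h2
  | cons c t ih =>
    intro a b h1 hlast h2
    rw [List.Chain, List.chain_cons] at h1
    refine List.Chain.cons h1.1 (ih l₂ c b h1.2 ?_ h2)
    rw [List.getLast_cons (by simp)] at hlast
    exact hlast

private lemma tour {Arc : V → V → Prop} {S : Set V}
    (hsc : StronglyConnectedOn Arc S) {s0 : V} (hs0 : s0 ∈ S) :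
    ∀ xs : List V, (∀ x ∈ xs, x ∈ S) →
      ∃ l : List V, List.Chain (fun a b => a ∈ S ∧ b ∈ S ∧ Arc a b) s0 l ∧
        (s0 :: l).getLast (List.cons_ne_nil _ _) = s0 ∧ ∀ x ∈ xs, x ∈ s0 :: l := by
  intro xs
  induction xs with
  | nil => exact fun _ => ⟨[], List.Chain.nil, rfl, by simp⟩
  | cons x rest ih =>
    intro hmem
    obtain ⟨l, hl, hlast, hall⟩ := ih (fun y hy => hmem y (by simp [hy]))
    have hx : x ∈ S := hmem x (by simp)
    obtain ⟨c₁, hc₁, hc₁l⟩ := List.exists_isChain_cons_of_relationReflTransGen (hsc s0 hs0 x hx)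
    obtain ⟨c₂, hc₂, hc₂l⟩ := List.exists_isChain_cons_of_relationReflTransGen (hsc x hx s0 hs0)
    refine ⟨c₁ ++ (c₂ ++ l), ?_, ?_, ?_⟩
    · exact chain_append_chain _ c₁ s0 x hc₁ hc₁l
        (chain_append_chain _ c₂ x s0 hc₂ hc₂l hl)
    · rw [getLast_cons_append_eq c₁ (c₂ ++ l) hc₁l,
        getLast_cons_append_eq c₂ l hc₂l]
      exact hlast
    · intro y hy
      rcases List.mem_cons.1 hy with h | h
      · subst h
        have hm : (s0 :: c₁).getLast (List.cons_ne_nil _ _) ∈ s0 :: c₁ :=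
          List.getLast_mem _
        rw [hc₁l] at hm
        rcases List.mem_cons.1 hm with h' | h'
        · simp [h']
        · simp [h']
      · have := hall y h
        rcases List.mem_cons.1 this with h' | h'
        · simp [h']
        · simp [h']

theorem stmt3 [Fintype V] [Nonempty V] (Arc : V → V → Prop) (P : V → Bool)
    (hor : IsCMPOrientation Arc P) (hin : ∀ v, ∃ u, Arc u v)
    (U : Set V) (hU : U ⊆ {v | P v = false})
    (hsc : StronglyConnectedOn Arc ({v | P v = true} ∪ U)) :
    HasCDW Arc := by
  classical
  set S : Set V := {v | P v = true} ∪ U with hS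
  -- find a vertex with P = true
  obtain ⟨s0, hs0t⟩ : ∃ s0, P s0 = true := by
    obtain ⟨v0⟩ := ‹Nonempty V›
    by_cases h : P v0 = true
    · exact ⟨v0, h⟩
    · obtain ⟨u, hu⟩ := hin v0
      refine ⟨u, ?_⟩
      have := hor.1 u v0 hu
      simp only [Bool.not_eq_true] at h
      rw [h] at this
      simpa using this
  have hs0 : s0 ∈ S := Or.inl hs0t
  -- every vertex with P = true is in S; every vertex with P = false has an
  -- in-neighbour with P = true
  have hdomA : ∀ v, P v = false → ∃ u, P u = true ∧ Arc u v := by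
    intro v hv
    obtain ⟨u, hu⟩ := hin v
    have := hor.1 u v hu
    rw [hv] at this
    exact ⟨u, by simpa using this, hu⟩
  -- a list containing all of S
  obtain ⟨l, hl, hlast, hall⟩ := tour hsc hs0 S.toFinset.toList
    (fun x hx => by simpa using hx)
  have hallS : ∀ x ∈ S, x ∈ s0 :: l := fun x hx => hall x (by simpa using hx)
  refine ⟨s0 :: l.dropLast, ⟨?_, ?_, ?_⟩, ?_⟩
  · simp
  · -- Chain'
    have hch : List.Chain' (fun a b => a ∈ S ∧ b ∈ S ∧ Arc a b) (s0 :: l) := hl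
    have hch' : List.Chain' Arc (s0 :: l) := hch.imp (fun a b h => h.2.2)
    exact hch'.prefix (List.cons_prefix_cons.2 ⟨rfl, List.dropLast_prefix l⟩)
  · -- closure
    rcases eq_or_ne l [] with h | h
    · subst h; left; rfl
    · right
      intro a b ha hb
      have hdecomp : s0 :: l = (s0 :: l.dropLast) ++ [s0] := by
        conv_lhs => rw [← List.dropLast_append_getLast (l := l) h]
        rw [List.getLast_cons h] at hlast
        rw [hlast]
        rfl
      have hch : List.Chain' (fun a b => a ∈ S ∧ b ∈ S ∧ Arc a b) (s0 :: l) := hl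
      rw [hdecomp, List.Chain', List.isChain_append] at hch
      have harc := hch.2.2 b (by simpa using hb) s0 (by simp)
      obtain rfl : s0 = a := by simpa using ha
      exact harc.2.2
  · -- domination
    intro v
    by_cases hv : P v = true
    · left
      have hvS : v ∈ S := Or.inl hv
      have := hallS v hvS
      rcases List.mem_cons.1 this with h | h
      · simp [h]
      · rcases eq_or_ne l [] with hnil | hnil
        · simp [hnil] at h
        · rw [List.getLast_cons hnil] at hlast
          conv at h => rw [← List.dropLast_append_getLast (l := l) hnil]
          rw [hlast] at h
          rcases List.mem_append.1 h with h' | h'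
          · simp [h']
          · simp at h'; simp [h']
    · right
      simp only [Bool.not_eq_true] at hv
      obtain ⟨u, hut, hu⟩ := hdomA v hv
      refine ⟨u, ?_, hu⟩
      have huS : u ∈ S := Or.inl hut
      have := hallS u huS
      rcases List.mem_cons.1 this with h | h
      · simp [h]
      · rcases eq_or_ne l [] with hnil | hnil
        · simp [hnil] at h
        · rw [List.getLast_cons hnil] at hlast
          conv at h => rw [← List.dropLast_append_getLast (l := l) hnil]
          rw [hlast] at h
          rcases List.mem_append.1 h with h' | h'
          · simp [h']
          · simp at h'; simp [h']
end

section
/- Let D be an orientation of a complete bipartite graph with parts A and B, |A| ≤ |B|, such that every vertex has in-degree at least 1. If there exists U ⊆ B such that every vertex of A is dominated by exactly one vertex of U, then D has a closed dominating walk of length at most 2|A|. -/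
variable {V : Type*}

section CDWAux

variable (Arc : V → V → Prop)

open Classical in
/-- A connector vertex between `a` and `a'`, chosen so that `Arc a b` and `Arc b a'`
when such a vertex exists. -/
noncomputable def cdwConn (a a' : V) : V :=
  if h : ∃ b, Arc a b ∧ Arc b a' then h.choose else a

theorem cdwConn_spec {a a' : V} (h : ∃ b, Arc a b ∧ Arc b a') :
    Arc a (cdwConn Arc a a') ∧ Arc (cdwConn Arc a a') a' := by
  rw [cdwConn, dif_pos h]; exact h.choose_spec

/-- Interleave a list of vertices with connectors. -/
noncomputable def cdwSeg : List V → List V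
  | [] => []
  | [a] => [a]
  | a :: a' :: rest => a :: cdwConn Arc a a' :: cdwSeg (a' :: rest)

theorem cdwSeg_cons : ∀ (a : V) (l : List V), ∃ t, cdwSeg Arc (a :: l) = a :: t
  | _, [] => ⟨[], rfl⟩
  | _, _ :: _ => ⟨_, rfl⟩

theorem cdwSeg_head? : ∀ l : List V, (cdwSeg Arc l).head? = l.head?
  | [] => rfl
  | [_] => rfl
  | _ :: _ :: _ => rfl

theorem cdwSeg_getLast? : ∀ (a : V) (l : List V),
    (cdwSeg Arc (a :: l)).getLast? = (a :: l).getLast?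
  | _, [] => rfl
  | a, a' :: rest => by
    obtain ⟨t, ht⟩ := cdwSeg_cons Arc a' rest
    show (a :: cdwConn Arc a a' :: cdwSeg Arc (a' :: rest)).getLast? = _
    rw [ht, List.getLast?_cons_cons, List.getLast?_cons_cons, ← ht,
      cdwSeg_getLast? a' rest, List.getLast?_cons_cons]

theorem cdwSeg_mem : ∀ {x : V} {l : List V}, x ∈ l → x ∈ cdwSeg Arc l
  | x, [], h => by simp at h
  | x, [a], h => h
  | x, a :: a' :: rest, h => by
    show x ∈ a :: cdwConn Arc a a' :: cdwSeg Arc (a' :: rest)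
    rcases List.mem_cons.1 h with h | h
    · exact List.mem_cons.2 (Or.inl h)
    · exact List.mem_cons_of_mem _ (List.mem_cons_of_mem _ (cdwSeg_mem h))

theorem cdwSeg_length : ∀ (a : V) (l : List V),
    (cdwSeg Arc (a :: l)).length = 2 * (a :: l).length - 1
  | _, [] => rfl
  | a, a' :: rest => by
    show (a :: cdwConn Arc a a' :: cdwSeg Arc (a' :: rest)).length = _
    simp only [List.length_cons, cdwSeg_length a' rest]
    omega

theorem cdwSeg_chain' : ∀ {l : List V},
    l.Chain' (fun a a' => ∃ b, Arc a b ∧ Arc b a') → (cdwSeg Arc l).Chain' Arc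
  | [], _ => List.isChain_nil
  | [a], _ => List.isChain_singleton a
  | a :: a' :: rest, h => by
    replace h := List.isChain_cons_cons.1 h
    obtain ⟨hb, h'⟩ := h
    obtain ⟨h1, h2⟩ := cdwConn_spec Arc hb
    show List.IsChain Arc (a :: cdwConn Arc a a' :: cdwSeg Arc (a' :: rest))
    rw [List.isChain_cons, List.isChain_cons]
    refine ⟨?_, ?_, cdwSeg_chain' h'⟩
    · intro y hy
      simp only [List.head?_cons, Option.mem_def, Option.some.injEq] at hy
      exact hy ▸ h1
    · intro y hy
      rw [cdwSeg_head?] at hy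
      simp only [List.head?_cons, Option.mem_def, Option.some.injEq] at hy
      exact hy ▸ h2

variable (L : V → List V)

/-- Glue together segments, one per vertex of `us`. -/
noncomputable def cdwGlue : List V → List V
  | [] => []
  | u :: us => (u :: cdwSeg Arc (L u)) ++ cdwGlue us

theorem cdwGlue_head? (u : V) (us : List V) :
    (cdwGlue Arc L (u :: us)).head? = some u := rfl

theorem getLast?_cons_of_ne_nil {u : V} {m : List V} (hm : m ≠ []) :
    (u :: m).getLast? = m.getLast? := by
  have : u :: m = [u] ++ m := rfl
  rw [this, List.getLast?_append]
  obtain ⟨x, hx⟩ := Option.isSome_iff_exists.1 (List.getLast?_isSome.2 hm)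
  rw [hx]; rfl

theorem cdwGlue_mem₁ : ∀ {u : V} {us : List V}, u ∈ us → u ∈ cdwGlue Arc L us
  | _, [], h => by simp at h
  | u, u' :: us, h => by
    show u ∈ (u' :: cdwSeg Arc (L u')) ++ cdwGlue Arc L us
    rcases List.mem_cons.1 h with h | h
    · simp [h]
    · exact List.mem_append_right _ (cdwGlue_mem₁ h)

theorem cdwGlue_mem₂ : ∀ {x u : V} {us : List V}, u ∈ us → x ∈ L u →
    x ∈ cdwGlue Arc L us
  | _, _, [], h, _ => by simp at h
  | x, u, u' :: us, h, hx => by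
    show x ∈ (u' :: cdwSeg Arc (L u')) ++ cdwGlue Arc L us
    rcases List.mem_cons.1 h with h | h
    · subst h
      exact List.mem_append_left _ (List.mem_cons_of_mem _ (cdwSeg_mem Arc hx))
    · exact List.mem_append_right _ (cdwGlue_mem₂ h hx)

theorem cdwGlue_getLast? : ∀ (u : V) (us : List V), (∀ x ∈ u :: us, L x ≠ []) →
    (cdwGlue Arc L (u :: us)).getLast? =
      (L ((u :: us).getLast (List.cons_ne_nil _ _))).getLast?
  | u, [], hL => by
    show ((u :: cdwSeg Arc (L u)) ++ []).getLast? = _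
    have h1 : L u ≠ [] := hL u (by simp)
    obtain ⟨a, l, hal⟩ := List.exists_cons_of_ne_nil h1
    have h2 : cdwSeg Arc (L u) ≠ [] := by
      rw [hal]; obtain ⟨t, ht⟩ := cdwSeg_cons Arc a l; simp [ht]
    rw [List.append_nil, getLast?_cons_of_ne_nil h2, hal, cdwSeg_getLast?, List.getLast_singleton,
      ← hal]
  | u, u' :: us, hL => by
    show ((u :: cdwSeg Arc (L u)) ++ cdwGlue Arc L (u' :: us)).getLast? = _
    rw [List.getLast?_append, cdwGlue_getLast? u' us (fun x hx => hL x (List.mem_cons_of_mem _ hx))]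
    have h1 : L ((u' :: us).getLast (List.cons_ne_nil _ _)) ≠ [] :=
      hL _ (List.mem_cons_of_mem _ (List.getLast_mem _))
    obtain ⟨x, hx⟩ := Option.isSome_iff_exists.1 (List.getLast?_isSome.2 h1)
    have h2 : (u :: u' :: us).getLast (List.cons_ne_nil _ _) =
        (u' :: us).getLast (List.cons_ne_nil _ _) := List.getLast_cons _
    rw [hx, h2, hx]
    rfl

theorem cdwGlue_length : ∀ us : List V,
    (cdwGlue Arc L us).length = (us.map (fun u => (cdwSeg Arc (L u)).length + 1)).sum
  | [] => rfl
  | u :: us => by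
    show ((u :: cdwSeg Arc (L u)) ++ cdwGlue Arc L us).length = _
    simp only [List.length_append, List.length_cons, List.map_cons, List.sum_cons,
      cdwGlue_length us]

theorem cdwGlue_chain' : ∀ us : List V,
    (∀ u ∈ us, (L u).Chain' (fun a a' => ∃ b, Arc a b ∧ Arc b a')) →
    (∀ u ∈ us, L u ≠ []) →
    (∀ u ∈ us, ∀ a, (L u).head? = some a → Arc u a) →
    us.Chain' (fun u u' => ∀ a, (L u).getLast? = some a → Arc a u') →
    (cdwGlue Arc L us).Chain' Arc
  | [], _, _, _, _ => List.isChain_nil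
  | u :: us, hc, hne, hh, hch => by
    show List.Chain' Arc ((u :: cdwSeg Arc (L u)) ++ cdwGlue Arc L us)
    have hLu : L u ≠ [] := hne u (by simp)
    refine List.IsChain.append ?_ ?_ ?_
    · rw [List.isChain_cons]
      refine ⟨?_, cdwSeg_chain' Arc (hc u (by simp))⟩
      intro y hy
      rw [cdwSeg_head?] at hy
      exact hh u (by simp) y hy
    · exact cdwGlue_chain' us (fun x hx => hc x (List.mem_cons_of_mem _ hx))
        (fun x hx => hne x (List.mem_cons_of_mem _ hx))
        (fun x hx => hh x (List.mem_cons_of_mem _ hx)) hch.tail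
    · intro x hx
      cases us with
      | nil => intro y hy; simp [cdwGlue] at hy
      | cons u' us' =>
        intro y hy
        rw [cdwGlue_head?] at hy
        have hy' : u' = y := by simpa using hy
        subst hy'
        have hrel := (List.isChain_cons.1 hch).1 u' (by simp)
        have h2 : cdwSeg Arc (L u) ≠ [] := by
          obtain ⟨a, l, hal⟩ := List.exists_cons_of_ne_nil hLu
          rw [hal]; obtain ⟨t, ht⟩ := cdwSeg_cons Arc a l; simp [ht]
        rw [getLast?_cons_of_ne_nil h2] at hx
        obtain ⟨a, l, hal⟩ := List.exists_cons_of_ne_nil hLu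
        rw [hal, cdwSeg_getLast? Arc a l, ← hal] at hx
        exact hrel x hx

end CDWAux

theorem stmt4 [Fintype V] [Nonempty V] (Arc : V → V → Prop) (P : V → Bool)
    (hor : IsCMPOrientation Arc P)
    (hcard : ({v | P v = true} : Set V).ncard ≤ ({v | P v = false} : Set V).ncard)
    (hin : ∀ v, ∃ u, Arc u v)
    (U : Set V) (hU : U ⊆ {v | P v = false})
    (hdom : ∀ a ∈ ({v | P v = true} : Set V), ∃! u, u ∈ U ∧ Arc u a) :
    ∃ l, IsCDW Arc l ∧ walkLength l ≤ 2 * ({v | P v = true} : Set V).ncard := by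
  classical
  obtain ⟨hne, hcomp⟩ := hor
  have hPcases : ∀ v : V, P v = true ∨ P v = false := fun v => by cases h : P v <;> simp
  have arcTrue : ∀ {u v : V}, Arc u v → P v = false → P u = true := by
    intro u v h hv
    have := hne u v h
    rw [hv] at this
    simpa using this
  have arcFalse : ∀ {u v : V}, Arc u v → P v = true → P u = false := by
    intro u v h hv
    have := hne u v h
    rw [hv] at this
    simpa using this
  have arcAB : ∀ {a b : V}, P a = true → P b = false → (Arc a b ↔ ¬ Arc b a) := by
    intro a b ha hb
    exact hcomp a b (by simp [ha, hb])
  -- the unique dominator function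
  have hdom' : ∀ a : V, ∃ u : V, P a = true →
      u ∈ U ∧ Arc u a ∧ ∀ y, y ∈ U → Arc y a → y = u := by
    intro a
    by_cases h : P a = true
    · obtain ⟨u, ⟨hu1, hu2⟩, hu3⟩ := hdom a h
      exact ⟨u, fun _ => ⟨hu1, hu2, fun y hy hya => hu3 y ⟨hy, hya⟩⟩⟩
    · exact ⟨Classical.arbitrary V, fun hh => absurd hh h⟩
  choose f hf using hdom'
  set Afin : Finset V := Finset.univ.filter (fun v => P v = true) with hAfin
  have hAfin_mem : ∀ v : V, v ∈ Afin ↔ P v = true := fun v => by simp [hAfin]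
  set Nf : V → Finset V := fun v => Finset.univ.filter (fun u => Arc u v) with hNfdef
  have hNf : ∀ {b v : V}, b ∈ Nf v ↔ Arc b v := fun {b v} => by simp [hNfdef]
  set FS : V → Finset (Finset V) := fun u => (Afin.filter (fun a => f a = u)).image Nf
    with hFSdef
  have hFS1 : ∀ {u s}, s ∈ FS u → ∃ a, P a = true ∧ f a = u ∧ Nf a = s := by
    intro u s hs
    simp only [hFSdef, Finset.mem_image, Finset.mem_filter, hAfin_mem] at hs
    obtain ⟨a, ⟨ha1, ha2⟩, ha3⟩ := hs
    exact ⟨a, ha1, ha2, ha3⟩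
  have hFS2 : ∀ {a}, P a = true → Nf a ∈ FS (f a) := by
    intro a ha
    simp only [hFSdef, Finset.mem_image, Finset.mem_filter, hAfin_mem]
    exact ⟨a, ⟨ha, rfl⟩, rfl⟩
  set MS : V → Finset (Finset V) := fun u => (FS u).filter (fun s => ∀ t ∈ FS u, ¬ t ⊂ s)
    with hMSdef
  have hMS1 : ∀ {u s}, s ∈ MS u → s ∈ FS u ∧ ∀ t ∈ FS u, ¬ t ⊂ s := by
    intro u s hs
    simpa only [hMSdef, Finset.mem_filter] using hs
  have hMS2 : ∀ {u s}, s ∈ FS u → (∀ t ∈ FS u, ¬ t ⊂ s) → s ∈ MS u := by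
    intro u s h1 h2
    simp only [hMSdef, Finset.mem_filter]
    exact ⟨h1, h2⟩
  have hpick' : ∀ (u : V) (s : Finset V), ∃ a : V, s ∈ FS u →
      P a = true ∧ f a = u ∧ Nf a = s := by
    intro u s
    by_cases h : s ∈ FS u
    · obtain ⟨a, ha1, ha2, ha3⟩ := hFS1 h
      exact ⟨a, fun _ => ⟨ha1, ha2, ha3⟩⟩
    · exact ⟨Classical.arbitrary V, fun hh => absurd hh h⟩
  choose pick hpick using hpick'
  set L : V → List V := fun u => ((MS u).toList).map (pick u) with hLdef
  set U₀ : Finset V := Afin.image f with hU₀def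
  have hU₀mem : ∀ {u}, u ∈ U₀ ↔ ∃ a, P a = true ∧ f a = u := by
    intro u
    simp only [hU₀def, Finset.mem_image, hAfin_mem]
  set us : List V := U₀.toList with husdef
  have hus : ∀ {u}, u ∈ us ↔ u ∈ U₀ := fun {u} => by
    simp only [husdef, Finset.mem_toList]
  -- membership facts for L
  have hLmem : ∀ {u x}, x ∈ L u → P x = true ∧ f x = u ∧ Nf x ∈ MS u := by
    intro u x hx
    simp only [hLdef, List.mem_map, Finset.mem_toList] at hx
    obtain ⟨s, hs, rfl⟩ := hx
    obtain ⟨h1, h2, h3⟩ := hpick u s (hMS1 hs).1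
    exact ⟨h1, h2, by rw [h3]; exact hs⟩
  have hLarc : ∀ {u x}, x ∈ L u → Arc u x := by
    intro u x hx
    obtain ⟨h1, h2, _⟩ := hLmem hx
    have := (hf x h1).2.1
    rwa [h2] at this
  have hAne : ∃ a : V, P a = true := by
    obtain ⟨v⟩ := (inferInstance : Nonempty V)
    obtain ⟨w, hw⟩ := hin v
    have hnePwv := hne w v hw
    rcases hPcases w with h | h
    · exact ⟨w, h⟩
    · rcases hPcases v with h' | h'
      · exact ⟨v, h'⟩
      · rw [h, h'] at hnePwv; simp at hnePwv
  have hU₀B : ∀ {u}, u ∈ U₀ → P u = false := by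
    intro u hu
    obtain ⟨a, ha, rfl⟩ := hU₀mem.1 hu
    exact hU ((hf a ha).1)
  have hU₀U : ∀ {u}, u ∈ U₀ → u ∈ U := by
    intro u hu
    obtain ⟨a, ha, rfl⟩ := hU₀mem.1 hu
    exact (hf a ha).1
  have key : ∀ {a u'}, P a = true → u' ∈ U → u' ≠ f a → Arc a u' := by
    intro a u' ha hu' hne'
    have hPu' : P u' = false := hU hu'
    rw [arcAB ha hPu']
    intro harc
    exact hne' ((hf a ha).2.2 u' hu' harc)
  have hMSne : ∀ {u}, u ∈ U₀ → (MS u).Nonempty := by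
    intro u hu
    obtain ⟨a, ha, rfl⟩ := hU₀mem.1 hu
    obtain ⟨m, hm, hmin⟩ : ∃ m ∈ FS (f a), ∀ t ∈ FS (f a), ¬ t < m := by
      obtain ⟨m, hm⟩ := Finset.exists_minimal ⟨Nf a, hFS2 ha⟩
      exact ⟨m, hm.prop, fun t ht => hm.not_lt ht⟩
    exact ⟨m, hMS2 hm (fun t ht hts => hmin t ht (Finset.lt_iff_ssubset.2 hts))⟩
  have hLne : ∀ {u}, u ∈ U₀ → L u ≠ [] := by
    intro u hu hcon
    simp only [hLdef, List.map_eq_nil_iff, Finset.toList_eq_nil] at hcon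
    exact Finset.nonempty_iff_ne_empty.1 (hMSne hu) hcon
  have hcover : ∀ {w}, P w = true → ∃ x, x ∈ L (f w) ∧ Nf x ⊆ Nf w := by
    intro w hw
    have hNfw : Nf w ∈ FS (f w) := hFS2 hw
    obtain ⟨m, hm, hmin⟩ : ∃ m ∈ (FS (f w)).filter (fun s => s ⊆ Nf w),
        ∀ t ∈ (FS (f w)).filter (fun s => s ⊆ Nf w), ¬ t < m := by
      obtain ⟨m, hm⟩ := Finset.exists_minimal (s := (FS (f w)).filter (fun s => s ⊆ Nf w))
        ⟨Nf w, Finset.mem_filter.2 ⟨hNfw, Finset.Subset.refl _⟩⟩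
      exact ⟨m, hm.prop, fun t ht => hm.not_lt ht⟩
    obtain ⟨hmFS, hmsub⟩ := Finset.mem_filter.1 hm
    have hmMS : m ∈ MS (f w) := by
      refine hMS2 hmFS (fun t ht hts => ?_)
      exact hmin t (Finset.mem_filter.2 ⟨ht, hts.subset.trans hmsub⟩)
        (Finset.lt_iff_ssubset.2 hts)
    refine ⟨pick (f w) m, ?_, ?_⟩
    · simp only [hLdef, List.mem_map, Finset.mem_toList]
      exact ⟨m, hmMS, rfl⟩
    · rw [(hpick (f w) m hmFS).2.2]
      exact hmsub
  have hLchain : ∀ u : V, (L u).Chain' (fun a a' => ∃ b, Arc a b ∧ Arc b a') := by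
    intro u
    have hnd : ((MS u).toList).Nodup := Finset.nodup_toList _
    simp only [hLdef]
    refine List.Pairwise.isChain ?_
    rw [List.pairwise_map]
    refine hnd.imp_of_mem ?_
    intro s t hs ht hst
    rw [Finset.mem_toList] at hs ht
    obtain ⟨hP₁, hf₁, hN₁⟩ := hpick u s (hMS1 hs).1
    obtain ⟨hP₂, hf₂, hN₂⟩ := hpick u t (hMS1 ht).1
    have hnsub : ¬ t ⊆ s := by
      intro hsub
      exact (hMS1 hs).2 t (hMS1 ht).1
        (Finset.ssubset_iff_subset_ne.2 ⟨hsub, fun h => hst h.symm⟩)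
    obtain ⟨b, hbt, hbs⟩ := Finset.not_subset.1 hnsub
    have harc2 : Arc b (pick u t) := by
      rw [← hN₂] at hbt
      exact hNf.1 hbt
    have hPb : P b = false := arcFalse harc2 hP₂
    have harc1 : Arc (pick u s) b := by
      rw [arcAB hP₁ hPb]
      intro hcon
      rw [← hN₁] at hbs
      exact hbs (hNf.2 hcon)
    exact ⟨b, harc1, harc2⟩
  have husnd : us.Nodup := Finset.nodup_toList _
  have huschain : us.Chain' (fun u u' => ∀ a, (L u).getLast? = some a → Arc a u') := by
    refine List.Pairwise.isChain (husnd.imp_of_mem ?_)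
    intro u u' hu hu' hne' a hlast
    have ha : a ∈ L u := List.mem_of_mem_getLast? (Option.mem_def.2 hlast)
    obtain ⟨hPa, hfa, _⟩ := hLmem ha
    refine key hPa (hU₀U (hus.1 hu')) ?_
    rw [hfa]
    exact fun h => hne' h.symm
  have hushead : ∀ u ∈ us, ∀ a, (L u).head? = some a → Arc u a := by
    intro u hu a hhead
    exact hLarc (List.mem_of_mem_head? (Option.mem_def.2 hhead))
  have hU₀ne : U₀.Nonempty := by
    obtain ⟨a, ha⟩ := hAne
    exact ⟨f a, hU₀mem.2 ⟨a, ha, rfl⟩⟩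
  have husne : us ≠ [] := by
    simp only [husdef, ne_eq, Finset.toList_eq_nil]
    exact Finset.nonempty_iff_ne_empty.1 hU₀ne
  obtain ⟨u₁, usrest, huscons⟩ := List.exists_cons_of_ne_nil husne
  have h2card : 1 < U₀.card := by
    obtain ⟨u, hu⟩ := hU₀ne
    obtain ⟨w, hw⟩ := hin u
    have hPu : P u = false := hU₀B hu
    have hPw : P w = true := arcTrue hw hPu
    have hfw : f w ≠ u := by
      intro hcon
      have harcU : Arc u w := by
        have := (hf w hPw).2.1
        rwa [hcon] at this
      rw [arcAB hPw hPu] at hw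
      exact hw harcU
    exact Finset.one_lt_card.2 ⟨f w, hU₀mem.2 ⟨w, hPw, rfl⟩, u, hu, hfw⟩
  have husrest : usrest ≠ [] := by
    intro hcon
    have hlen : us.length = 1 := by rw [huscons, hcon]; rfl
    rw [husdef, Finset.length_toList] at hlen
    omega
  have husLne : ∀ x ∈ us, L x ≠ [] := fun x hx => hLne (hus.1 hx)
  have hwalkchain : (cdwGlue Arc L us).Chain' Arc :=
    cdwGlue_chain' Arc L us (fun u _ => hLchain u) husLne hushead huschain
  have hwalkhead : (cdwGlue Arc L us).head? = some u₁ := by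
    rw [huscons]
    exact cdwGlue_head? Arc L u₁ usrest
  have hwalklast : (cdwGlue Arc L us).getLast? =
      (L ((u₁ :: usrest).getLast (List.cons_ne_nil _ _))).getLast? := by
    rw [huscons]
    exact cdwGlue_getLast? Arc L u₁ usrest (huscons ▸ husLne)
  set uk := (u₁ :: usrest).getLast (List.cons_ne_nil _ _) with hukdef
  have hukus : uk ∈ us := huscons ▸ List.getLast_mem _
  have hukU₀ : uk ∈ U₀ := hus.1 hukus
  have huk_ne : uk ≠ u₁ := by
    have h1 : uk ∈ usrest := by
      rw [hukdef, List.getLast_cons husrest]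
      exact List.getLast_mem _
    have h2 : u₁ ∉ usrest := by
      have hnd2 : (u₁ :: usrest).Nodup := huscons ▸ husnd
      exact (List.nodup_cons.1 hnd2).1
    intro hcon
    rw [hcon] at h1
    exact h2 h1
  have hu₁us : u₁ ∈ us := huscons ▸ List.mem_cons_self
  have hclose : ∀ a b, (cdwGlue Arc L us).head? = some a →
      (cdwGlue Arc L us).getLast? = some b → Arc b a := by
    intro a b hha hbb
    rw [hwalkhead] at hha
    injection hha with hha
    subst hha
    rw [hwalklast] at hbb
    have hbmem : b ∈ L uk := List.mem_of_mem_getLast? (Option.mem_def.2 hbb)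
    obtain ⟨hPb, hfb, _⟩ := hLmem hbmem
    refine key hPb (hU₀U (hus.1 hu₁us)) ?_
    rw [hfb]
    exact fun h => huk_ne h.symm
  have hseglen : ∀ u ∈ us, (cdwSeg Arc (L u)).length + 1 = 2 * (L u).length := by
    intro u hu
    obtain ⟨a, l, hal⟩ := List.exists_cons_of_ne_nil (husLne u hu)
    rw [hal, cdwSeg_length]
    simp only [List.length_cons]
    omega
  have hwalklen : (cdwGlue Arc L us).length = 2 * ∑ u ∈ U₀, (L u).length := by
    rw [cdwGlue_length, Finset.mul_sum, ← Finset.sum_map_toList, ← husdef]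
    congr 1
    refine List.map_congr_left ?_
    intro u hu
    exact hseglen u hu
  have hLlen : ∀ u, (L u).length = (MS u).card := by
    intro u
    simp only [hLdef, List.length_map, Finset.length_toList]
  have hMScard : ∀ u, (MS u).card ≤ (Afin.filter (fun a => f a = u)).card := by
    intro u
    calc (MS u).card ≤ (FS u).card :=
          Finset.card_le_card (fun s hs => (hMS1 hs).1)
      _ ≤ _ := by rw [hFSdef]; exact Finset.card_image_le
  have hAcard : ∑ u ∈ U₀, (Afin.filter (fun a => f a = u)).card = Afin.card := by
    symm
    exact Finset.card_eq_sum_card_fiberwise (fun a ha => hU₀mem.2 ⟨a, (hAfin_mem a).1 ha, rfl⟩)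
  have hsumle : ∑ u ∈ U₀, (L u).length ≤ Afin.card := by
    rw [← hAcard]
    exact Finset.sum_le_sum (fun u _ => (hLlen u) ▸ hMScard u)
  have hlen_le : (cdwGlue Arc L us).length ≤ 2 * Afin.card := by
    rw [hwalklen]
    exact Nat.mul_le_mul_left 2 hsumle
  have hncard : ({v | P v = true} : Set V).ncard = Afin.card := by
    rw [← Set.ncard_coe_finset]
    congr 1
    ext v
    simp [hAfin]
  have hwne : cdwGlue Arc L us ≠ [] := by
    rw [huscons]
    show (u₁ :: cdwSeg Arc (L u₁)) ++ cdwGlue Arc L usrest ≠ []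
    simp
  have hwalklen1 : (cdwGlue Arc L us).length ≠ 1 := by
    rw [hwalklen]
    omega
  refine ⟨cdwGlue Arc L us, ⟨⟨hwne, hwalkchain, Or.inr hclose⟩, ?_⟩, ?_⟩
  · intro v
    rcases hPcases v with hv | hv
    · right
      refine ⟨f v, ?_, (hf v hv).2.1⟩
      have hfv : f v ∈ us := hus.2 (hU₀mem.2 ⟨v, hv, rfl⟩)
      exact cdwGlue_mem₁ Arc L hfv
    · obtain ⟨w, hw⟩ := hin v
      have hPw : P w = true := arcTrue hw hv
      obtain ⟨x, hxL, hxsub⟩ := hcover hPw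
      right
      refine ⟨x, ?_, ?_⟩
      · have hfwus : f w ∈ us := hus.2 (hU₀mem.2 ⟨w, hPw, rfl⟩)
        exact cdwGlue_mem₂ Arc L hfwus hxL
      · have hPx : P x = true := (hLmem hxL).1
        rw [arcAB hPx hv]
        intro hcon
        have hvNx : v ∈ Nf x := hNf.2 hcon
        have hvNw : v ∈ Nf w := hxsub hvNx
        exact (arcAB hPw hv).1 hw (hNf.1 hvNw)
  · simp only [walkLength, if_neg hwalklen1]
    rw [hncard]
    exact hlen_le
end

section
/- Let D be an orientation of a complete k-partite graph, k ≥ 2, in which every vertex has in-degree at least 1. Then the condensation of D has a source vertex whose corresponding strong component is a dominating set of D, and consequently D has a closed dominating walk. -/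
variable {V : Type*}

private lemma path_of_rtg {A : V → V → Prop} {a b : V} (h : Relation.ReflTransGen A a b) :
    ∃ l : List V, l.Chain' A ∧ l.head? = some a ∧ l.getLast? = some b := by
  induction h with
  | refl => exact ⟨[a], List.isChain_singleton a, rfl, rfl⟩
  | @tail b c _ hbc ih =>
    obtain ⟨l, hc, hh, hl⟩ := ih
    refine ⟨l ++ [c], ?_, ?_, ?_⟩
    · show List.IsChain A (l ++ [c])
      rw [List.isChain_append]
      refine ⟨hc, List.isChain_singleton c, ?_⟩
      intro x hx y hy
      rw [hl] at hx
      simp only [List.head?_cons, Option.mem_def, Option.some.injEq] at hx hy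
      subst hx; subst hy; exact hbc
    · cases l with
      | nil => simp at hh
      | cons x xs => simpa using hh
    · simp [List.getLast?_concat]

private lemma getLast?_mem' {l : List V} {a : V} (h : l.getLast? = some a) : a ∈ l := by
  cases l with
  | nil => simp at h
  | cons x xs =>
    rw [List.getLast?_eq_getLast (l := _) (by simp)] at h
    rw [← Option.some_inj.mp h]
    exact List.getLast_mem _

private lemma path_trans {A : V → V → Prop} {a b c : V} {p q : List V}
    (hp : p.Chain' A) (hph : p.head? = some a) (hpl : p.getLast? = some b)
    (hq : q.Chain' A) (hqh : q.head? = some b) (hql : q.getLast? = some c) :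
    ∃ l : List V, l.Chain' A ∧ l.head? = some a ∧ l.getLast? = some c ∧
      ∀ x, (x ∈ p ∨ x ∈ q) → x ∈ l := by
  obtain ⟨t, rfl⟩ : ∃ t, q = b :: t := by
    cases q with
    | nil => simp at hqh
    | cons y ys =>
      have hyb : y = b := by simpa using hqh
      exact ⟨ys, by rw [hyb]⟩
  refine ⟨p ++ t, ?_, ?_, ?_, ?_⟩
  · show List.IsChain A (p ++ t)
    rw [List.isChain_append]
    refine ⟨hp, hq.tail, ?_⟩
    intro x hx y hy
    rw [hpl] at hx
    simp only [Option.mem_def, Option.some.injEq] at hx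
    subst hx
    cases t with
    | nil => simp at hy
    | cons z zs =>
      simp only [List.head?_cons, Option.mem_def, Option.some.injEq] at hy
      subst hy
      exact (List.isChain_cons_cons.mp hq).1
  · cases p with
    | nil => simp at hph
    | cons x xs => simpa using hph
  · cases t with
    | nil =>
      simp only [List.append_nil]
      rw [hpl]
      simpa using hql
    | cons z zs =>
      rw [List.getLast?_append]
      have h : (z :: zs).getLast? = some c := by rwa [List.getLast?_cons_cons] at hql
      rw [h]
      rfl
  · intro x hx
    rcases hx with hx | hx
    · exact List.mem_append_left _ hx
    · rcases List.mem_cons.mp hx with rfl | hx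
      · exact List.mem_append_left _ (getLast?_mem' hpl)
      · exact List.mem_append_right _ hx

private lemma loop_through {A : V → V → Prop} {v : V} (S : List V)
    (hS : ∀ s ∈ S, Relation.ReflTransGen A v s ∧ Relation.ReflTransGen A s v) :
    ∃ l : List V, l.Chain' A ∧ l.head? = some v ∧ l.getLast? = some v ∧ ∀ s ∈ S, s ∈ l := by
  induction S with
  | nil => exact ⟨[v], List.isChain_singleton v, rfl, rfl, by simp⟩
  | cons s S ih =>
    obtain ⟨l, hc, hh, hl, hmem⟩ := ih (fun x hx => hS x (List.mem_cons_of_mem _ hx))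
    obtain ⟨h1, h2⟩ := hS s (List.mem_cons_self)
    obtain ⟨p, hpc, hph, hpl⟩ := path_of_rtg h1
    obtain ⟨q, hqc, hqh, hql⟩ := path_of_rtg h2
    obtain ⟨r, hrc, hrh, hrl, hrmem⟩ := path_trans hpc hph hpl hqc hqh hql
    obtain ⟨w, hwc, hwh, hwl, hwmem⟩ := path_trans hrc hrh hrl hc hh hl
    refine ⟨w, hwc, hwh, hwl, ?_⟩
    intro x hx
    rcases List.mem_cons.mp hx with rfl | hx
    · exact hwmem x (Or.inl (hrmem x (Or.inl (getLast?_mem' hpl))))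
    · exact hwmem x (Or.inr (hmem x hx))

private lemma cdw_of_loop {A : V → V → Prop} {v : V} {l : List V}
    (hc : l.Chain' A) (hh : l.head? = some v) (hl : l.getLast? = some v) :
    ∃ w : List V, IsClosedWalk A w ∧ ∀ x ∈ l, x ∈ w := by
  obtain ⟨t, rfl⟩ : ∃ t, l = v :: t := by
    cases l with
    | nil => simp at hh
    | cons y ys =>
      have hyv : y = v := by simpa using hh
      exact ⟨ys, by rw [hyv]⟩
  cases t with
  | nil =>
    exact ⟨[v], ⟨by simp, List.isChain_singleton v, Or.inl rfl⟩, by simp⟩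
  | cons y ys =>
    set L : List V := v :: y :: ys with hL
    have hne : L ≠ [] := by simp [hL]
    have hsplit : L.dropLast ++ [v] = L := by
      have := List.dropLast_append_getLast hne
      rwa [show L.getLast hne = v by
        have := List.getLast?_eq_getLast (l := L) hne
        rw [hl] at this
        exact (Option.some_inj.mp this).symm] at this
    have hdne : L.dropLast ≠ [] := by simp [hL]
    have hdh : L.dropLast.head? = some v := by
      simp [hL, List.dropLast]
    have hc' : L.dropLast.Chain' A ∧ ∀ x ∈ L.dropLast.getLast?, ∀ y ∈ ([v] : List V).head?, A x y := by
      have := hc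
      change List.IsChain A L at this
      rw [← hsplit, List.isChain_append] at this
      exact ⟨this.1, this.2.2⟩
    refine ⟨L.dropLast, ⟨hdne, hc'.1, Or.inr ?_⟩, ?_⟩
    · intro a b ha hb
      rw [hdh] at ha
      have : A b v := hc'.2 b (by rw [hb]; rfl) v rfl
      rwa [← Option.some_inj.mp ha]
    · intro x hx
      rw [← hsplit, List.mem_append] at hx
      rcases hx with hx | hx
      · exact hx
      · simp only [List.mem_singleton] at hx
        subst hx
        exact List.mem_of_mem_head? (by rw [hdh]; rfl)

theorem stmt5 [Fintype V] [Nonempty V] {ι : Type*} [Fintype ι]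
    (A : V → V → Prop) (P : V → ι)
    (hor : IsCMPOrientation A P) (hk : 2 ≤ Fintype.card ι)
    (hsurj : Function.Surjective P) (hin : ∀ v, ∃ u, A u v) :
    (∃ v : V, (∀ u ∉ StrongComp A v, ∀ s ∈ StrongComp A v, ¬ A u s) ∧
      Dom A (StrongComp A v)) ∧ HasCDW A := by
  classical
  obtain ⟨v, -, hv⟩ := Finset.exists_max_image (Finset.univ : Finset V)
    (fun w => (Finset.univ.filter (fun u => Relation.ReflTransGen A w u)).card)
    ⟨Classical.arbitrary V, Finset.mem_univ _⟩
  have hmax : ∀ u, Relation.ReflTransGen A u v → Relation.ReflTransGen A v u := by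
    intro u hu
    by_contra hnot
    have hsub : (Finset.univ.filter (fun x => Relation.ReflTransGen A v x)) ⊂
        (Finset.univ.filter (fun x => Relation.ReflTransGen A u x)) := by
      constructor
      · intro x hx
        simp only [Finset.mem_filter, Finset.mem_univ, true_and] at hx ⊢
        exact hu.trans hx
      · intro hcon
        have : u ∈ Finset.univ.filter (fun x => Relation.ReflTransGen A u x) := by
          simp [Relation.ReflTransGen.refl]
        exact hnot (by simpa using hcon this)
    exact absurd (hv u (Finset.mem_univ _)) (not_le.mpr (Finset.card_lt_card hsub))
  have hvmem : v ∈ StrongComp A v := ⟨Relation.ReflTransGen.refl, Relation.ReflTransGen.refl⟩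
  have hsource : ∀ u ∉ StrongComp A v, ∀ s ∈ StrongComp A v, ¬ A u s := by
    intro u hu s hs hA
    have huv : Relation.ReflTransGen A u v :=
      (Relation.ReflTransGen.single hA).trans hs.2
    exact hu ⟨hmax u huv, huv⟩
  have hdom : Dom A (StrongComp A v) := by
    intro w
    by_contra hcon
    push_neg at hcon
    obtain ⟨hw1, hw2⟩ := hcon
    have hPs : ∀ s ∈ StrongComp A v, P s = P w := by
      intro s hs
      by_contra hne
      have hAsw : ¬ A s w := hw2 s hs
      have hAws : A w s := ((hor.2 w s (Ne.symm hne)).mpr) (by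
        intro h
        exact hAsw h)
      have hwv : Relation.ReflTransGen A w v :=
        (Relation.ReflTransGen.single hAws).trans hs.2
      exact hw1 ⟨hmax w hwv, hwv⟩
    obtain ⟨u, hAuv⟩ := hin v
    have huv : Relation.ReflTransGen A u v := Relation.ReflTransGen.single hAuv
    have humem : u ∈ StrongComp A v := ⟨hmax u huv, huv⟩
    have h1 : P u = P w := hPs u humem
    have h2 : P v = P w := hPs v hvmem
    exact hor.1 u v hAuv (h1.trans h2.symm)
  refine ⟨⟨v, hsource, hdom⟩, ?_⟩
  -- build a closed dominating walk
  obtain ⟨l, hc, hh, hl, hmem⟩ := loop_through ((StrongComp A v).toFinite.toFinset.toList)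
    (by
      intro s hs
      rw [Finset.mem_toList, Set.Finite.mem_toFinset] at hs
      exact ⟨hs.1, hs.2⟩)
  obtain ⟨w, hw, hwmem⟩ := cdw_of_loop hc hh hl
  refine ⟨w, hw, ?_⟩
  have hsubset : StrongComp A v ⊆ {x | x ∈ w} := by
    intro x hx
    exact hwmem x (hmem x (by rw [Finset.mem_toList, Set.Finite.mem_toFinset]; exact hx))
  intro x
  rcases hdom x with hx | ⟨u, hu, hAu⟩
  · exact Or.inl (hsubset hx)
  · exact Or.inr ⟨u, hsubset hu, hAu⟩
end

section
/- If T is a strongly connected tournament of order n ≥ 5, then T has a closed dominating walk of length at most n - 2. -/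
variable {V : Type*}


lemma my_ins (A : V → V → Prop) (htot : ∀ a b : V, a ≠ b → A a b ∨ A b a) :
    ∀ (l : List V) (a : V), l.Chain' A → a ∉ l →
      ∃ l' : List V, l'.Perm (a :: l) ∧ l'.Chain' A ∧ (l'.head? = some a ∨ l'.head? = l.head?) := by
  intro l
  induction l with
  | nil =>
    intro a _ _
    exact ⟨[a], List.Perm.refl _, List.isChain_singleton a, Or.inl rfl⟩
  | cons b t ih =>
    intro a hc ha
    have hab : a ≠ b := fun h => ha (h ▸ List.mem_cons_self)
    rcases htot a b hab with h | h
    · exact ⟨a :: b :: t, List.Perm.refl _, List.isChain_cons_cons.mpr ⟨h, hc⟩, Or.inl rfl⟩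
    · obtain ⟨t', hperm, hchain, hhead⟩ :=
        ih a hc.tail (fun hmem => ha (List.mem_cons_of_mem _ hmem))
      refine ⟨b :: t', ?_, ?_, Or.inr rfl⟩
      · exact (hperm.cons b).trans (List.Perm.swap a b t)
      · apply List.isChain_cons.mpr
        refine ⟨?_, hchain⟩
        intro c hc'
        rcases hhead with h1 | h1
        · rw [h1] at hc'
          simp only [Option.mem_def, Option.some.injEq] at hc'
          exact hc' ▸ h
        · rw [h1] at hc'
          exact (List.isChain_cons.mp hc).1 c hc'

lemma my_ham (A : V → V → Prop) (htot : ∀ a b : V, a ≠ b → A a b ∨ A b a)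
    (s : Finset V) : ∃ l : List V, l.Perm s.toList ∧ l.Chain' A := by
  classical
  induction s using Finset.induction_on with
  | empty => exact ⟨[], by simp, List.isChain_nil⟩
  | insert _ _ ha ih =>
    rename_i a s
    obtain ⟨l, hperm, hchain⟩ := ih
    have hal : a ∉ l := fun h => ha (Finset.mem_toList.mp (hperm.mem_iff.mp h))
    obtain ⟨l', hp', hc', _⟩ := my_ins A htot l a hchain hal
    exact ⟨l', hp'.trans ((hperm.cons a).trans (Finset.toList_insert ha).symm), hc'⟩


theorem stmt7 [Fintype V] (A : V → V → Prop) (hT : IsTournament A)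
    (hn : 5 ≤ Fintype.card V) (hs : ∀ u v : V, Relation.ReflTransGen A u v) :
    ∃ l, IsCDW A l ∧ walkLength l ≤ Fintype.card V - 2 := by
  classical
  obtain ⟨hirr, htour⟩ := hT
  have htot : ∀ a b : V, a ≠ b → A a b ∨ A b a := by
    intro a b hab
    by_cases h : A a b
    · exact Or.inl h
    · exact Or.inr ((htour b a hab.symm).mpr h)
  have hasym : ∀ a b : V, A a b → ¬ A b a := by
    intro a b hab hba
    by_cases h : a = b
    · exact hirr a (h ▸ hab)
    · exact (htour a b h).mp hab hba
  -- degree function and vertex of maximum out-degree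
  set deg : V → ℕ := fun x => (Finset.univ.filter (fun y => A x y)).card with hdeg
  have hnev : Nonempty V := Fintype.card_pos_iff.mp (by omega)
  have hne : (Finset.univ : Finset V).Nonempty := Finset.univ_nonempty
  obtain ⟨v, -, hmax⟩ := Finset.exists_max_image Finset.univ deg hne
  have hmax' : ∀ x : V, deg x ≤ deg v := fun x => hmax x (Finset.mem_univ x)
  set Np : Finset V := Finset.univ.filter (fun y => A v y) with hNp
  set Nm : Finset V := Finset.univ.filter (fun y => A y v) with hNm
  have hNpmem : ∀ x, x ∈ Np ↔ A v x := by intro x; simp [hNp]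
  have hNmmem : ∀ x, x ∈ Nm ↔ A x v := by intro x; simp [hNm]
  -- every in-neighbour of v is beaten by some out-neighbour of v
  have hin : ∀ x ∈ Nm, ∃ u ∈ Np, A u x := by
    intro x hx
    by_contra hcon
    push_neg at hcon
    have hxv : A x v := (hNmmem x).mp hx
    have hsub : insert v Np ⊆ Finset.univ.filter (fun y => A x y) := by
      intro y hy
      simp only [Finset.mem_insert] at hy
      rcases hy with rfl | hy
      · simp [hxv]
      · have hvy : A v y := (hNpmem y).mp hy
        have hxy : x ≠ y := by
          rintro rfl
          exact hasym v x hvy hxv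
        rcases htot x y hxy with h | h
        · simp [h]
        · exact absurd h (hcon y hy)
    have hvnot : v ∉ Np := by simp [hNp, hirr v]
    have := Finset.card_le_card hsub
    rw [Finset.card_insert_of_notMem hvnot] at this
    have h2 : deg x ≤ deg v := hmax' x
    simp only [hdeg] at h2
    have e1 := congrArg Finset.card hNp
    omega
  -- Nm is nonempty
  have hNmne : Nm.Nonempty := by
    have h1 : 1 < Fintype.card V := by omega
    obtain ⟨x, hx⟩ := Fintype.exists_ne_of_one_lt_card h1 v
    rcases Relation.ReflTransGen.cases_tail (hs x v) with h | ⟨c, -, hcv⟩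
    · exact absurd h.symm hx
    · exact ⟨c, (hNmmem c).mpr hcv⟩
  -- partition cardinality
  have hcardsum : Np.card + Nm.card = Fintype.card V - 1 := by
    have hdisj : Disjoint Np Nm := by
      rw [Finset.disjoint_left]
      intro x hx1 hx2
      exact hasym v x ((hNpmem x).mp hx1) ((hNmmem x).mp hx2)
    have hunion : Np ∪ Nm = Finset.univ.erase v := by
      ext x
      simp only [Finset.mem_union, Finset.mem_erase, Finset.mem_univ, and_true]
      constructor
      · rintro (h | h)
        · intro heq; rw [heq] at h; exact hirr v ((hNpmem v).mp h)
        · intro heq; rw [heq] at h; exact hirr v ((hNmmem v).mp h)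
      · intro hx
        rcases htot v x (Ne.symm hx) with h | h
        · exact Or.inl ((hNpmem x).mpr h)
        · exact Or.inr ((hNmmem x).mpr h)
    have := Finset.card_union_of_disjoint hdisj
    rw [hunion, Finset.card_erase_of_mem (Finset.mem_univ v), Finset.card_univ] at this
    omega
  by_cases hsmall : Nm.card + 4 ≤ Fintype.card V
  · -- long walk through all of Nm
    obtain ⟨L, hLperm, hLchain⟩ := my_ham A htot Nm
    have hLmem : ∀ x, x ∈ L ↔ x ∈ Nm := by
      intro x; rw [hLperm.mem_iff, Finset.mem_toList]
    have hLlen : L.length = Nm.card := by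
      rw [hLperm.length_eq, Finset.length_toList]
    have hLne : L ≠ [] := by
      intro h
      rcases hNmne with ⟨x, hx⟩
      exact absurd ((hLmem x).mpr hx) (h ▸ List.not_mem_nil (a := x))
    obtain ⟨w₀, t, rfl⟩ := List.exists_cons_of_ne_nil hLne
    have hw₀ : w₀ ∈ Nm := (hLmem w₀).mp (List.mem_cons_self)
    obtain ⟨u, hu, huw⟩ := hin w₀ hw₀
    have hvu : A v u := (hNpmem u).mp hu
    refine ⟨v :: u :: w₀ :: t, ⟨⟨by simp, ?_, Or.inr ?_⟩, ?_⟩, ?_⟩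
    · exact List.isChain_cons_cons.mpr ⟨hvu, List.isChain_cons_cons.mpr ⟨huw, hLchain⟩⟩
    · intro a b ha hb
      simp only [List.head?_cons, Option.some.injEq] at ha
      have hb' : b ∈ w₀ :: t := by
        have h1 : (v :: u :: w₀ :: t).getLast? = (w₀ :: t).getLast? := by
          rw [List.getLast?_cons_cons, List.getLast?_cons_cons]
        rw [h1] at hb
        obtain ⟨hne', heq⟩ := List.mem_getLast?_eq_getLast (Option.mem_def.mpr hb)
        rw [heq]
        exact List.getLast_mem hne'
      subst ha
      exact (hNmmem b).mp ((hLmem b).mp hb')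
    · intro x
      by_cases hx : x ∈ v :: u :: w₀ :: t
      · exact Or.inl hx
      · right
        refine ⟨v, List.mem_cons_self, ?_⟩
        have hxv : x ≠ v := fun h => hx (h ▸ List.mem_cons_self)
        rcases htot v x (Ne.symm hxv) with h | h
        · exact h
        · exact absurd (List.mem_cons_of_mem _ (List.mem_cons_of_mem _
            ((hLmem x).mpr ((hNmmem x).mpr h)))) hx
    · have hlen : (v :: u :: w₀ :: t).length = Nm.card + 2 := by
        simp only [List.length_cons]
        have : t.length + 1 = Nm.card := by simpa using hLlen
        omega
      rw [walkLength, hlen]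
      have : ¬ (Nm.card + 2 = 1) := by omega
      rw [if_neg (by omega)]
      omega
  · -- dominating triangle: max out-degree is at most 2
    have hdv : deg v ≤ 2 := by
      have : Np.card = deg v := rfl
      omega
    obtain ⟨w, hw⟩ := hNmne
    obtain ⟨u, hu, huw⟩ := hin w hw
    have hvu : A v u := (hNpmem u).mp hu
    have hwv : A w v := (hNmmem w).mp hw
    refine ⟨[v, u, w], ⟨⟨by simp, ?_, Or.inr ?_⟩, ?_⟩, ?_⟩
    · exact List.isChain_cons_cons.mpr ⟨hvu, List.isChain_cons_cons.mpr ⟨huw, List.isChain_singleton w⟩⟩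
    · intro a b ha hb
      simp only [List.head?_cons, Option.some.injEq] at ha
      have hb' : w = b := by simpa using hb
      subst ha; cases hb'; exact hwv
    · intro x
      by_cases hx : x ∈ [v, u, w]
      · exact Or.inl hx
      · right
        simp only [List.mem_cons, List.not_mem_nil, or_false, not_or] at hx
        obtain ⟨hxv, hxu, hxw⟩ := hx
        by_cases h1 : A v x
        · exact ⟨v, by simp, h1⟩
        by_cases h2 : A u x
        · exact ⟨u, by simp, h2⟩
        by_cases h3 : A w x
        · exact ⟨w, by simp, h3⟩
        exfalso
        have hx1 : A x v := (htot x v hxv).resolve_right h1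
        have hx2 : A x u := (htot x u hxu).resolve_right h2
        have hx3 : A x w := (htot x w hxw).resolve_right h3
        have hvu' : v ≠ u := fun h => hirr v (h ▸ hvu)
        have huw' : u ≠ w := fun h => hirr u (h ▸ huw)
        have hvw' : v ≠ w := fun h => hirr w (h ▸ hwv)
        have hsub : ({v, u, w} : Finset V) ⊆ Finset.univ.filter (fun y => A x y) := by
          intro y hy
          simp only [Finset.mem_insert, Finset.mem_singleton] at hy
          rcases hy with rfl | rfl | rfl <;> simp [hx1, hx2, hx3]
        have hcard3 : ({v, u, w} : Finset V).card = 3 := by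
          rw [Finset.card_insert_of_notMem (by simp [hvu', hvw']),
            Finset.card_insert_of_notMem (by simp [huw']), Finset.card_singleton]
        have := Finset.card_le_card hsub
        have h2 : deg x ≤ deg v := hmax' x
        simp only [hdeg] at h2
        have e1 := congrArg Finset.card hNp
        have e2 : (Finset.univ.filter (fun y => A v y)).card = deg v := by
          rw [hdeg]
        omega
    · rw [walkLength]
      norm_num
      omega
end

section
/- If T is a tournament of order n ≥ 3 with domination number γ(T) > 1, then the watchman number satisfies w(T) = γ(T) or w(T) = γ(T) + 1. -/
variable {V : Type*}

section Aux
variable {A : V → V → Prop}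

lemma insert_path (hT : IsTournament A) (x : V) :
    ∀ l : List V, l.Chain' A → (∀ a ∈ l, a ≠ x) →
    ∃ l' : List V, l'.Chain' A ∧ l'.Perm (x :: l) ∧
      (l'.head? = some x ∨ l'.head? = l.head?) := by
  intro l
  induction l with
  | nil => exact fun _ _ => ⟨[x], List.isChain_singleton x, by simp, Or.inl rfl⟩
  | cons a t ih =>
    intro hch hne
    by_cases hxa : A x a
    · exact ⟨x :: a :: t, hch.cons (by simpa using hxa), .refl _, Or.inl rfl⟩
    · have hax : A a x := (hT.2 a x (hne a (by simp))).mpr hxa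
      obtain ⟨l'', hc'', hp'', hh''⟩ := ih (hch.tail) (fun b hb => hne b (by simp [hb]))
      refine ⟨a :: l'', ?_, ?_, Or.inr rfl⟩
      · refine List.isChain_cons.mpr ?_
        refine ⟨?_, hc''⟩
        intro h hh
        rcases hh'' with h1 | h1
        · rw [h1] at hh; simp at hh; subst hh; exact hax
        · rw [h1] at hh
          have := (List.isChain_cons.mp hch).1
          exact this h hh
      · exact (hp''.cons a).trans (List.Perm.swap x a t)

lemma ham (hT : IsTournament A) [DecidableEq V] (s : Finset V) :
    ∃ l : List V, l.Nodup ∧ l.toFinset = s ∧ l.Chain' A := by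
  induction s using Finset.induction_on with
  | empty => exact ⟨[], by simp, by simp, List.isChain_nil⟩
  | @insert x s hx ih =>
    obtain ⟨l, hn, hf, hc⟩ := ih
    have hne : ∀ a ∈ l, a ≠ x := by
      rintro a ha rfl; exact hx (hf ▸ List.mem_toFinset.mpr ha)
    obtain ⟨l', hc', hp, -⟩ := insert_path hT x l hc hne
    refine ⟨l', ?_, ?_, hc'⟩
    · exact hp.nodup_iff.mpr (List.nodup_cons.mpr ⟨fun h => hne x h rfl, hn⟩)
    · rw [List.toFinset_eq_of_perm _ _ hp, List.toFinset_cons, hf]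

lemma exists_pred_last :
    ∀ (l : List V), l.Chain' A → l.Nodup → 2 ≤ l.length →
      ∀ b, l.getLast? = some b → ∃ w ∈ l, w ≠ b ∧ A w b := by
  intro l
  induction l with
  | nil => simp
  | cons a t ih =>
    intro hc hn hl b hb
    match t, hc, hn, hl, hb, ih with
    | [], _, _, hl, _, _ => simp at hl
    | [c], hc, hn, _, hb, _ =>
      have hbc : b = c := by symm; simpa using hb
      subst hbc
      refine ⟨a, by simp, ?_, ?_⟩
      · simp at hn; tauto
      · exact List.isChain_pair.mp hc
    | c :: d :: t', hc, hn, _, hb, ih =>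
      have hb' : (c :: d :: t').getLast? = some b := by
        rw [← hb]; simp [List.getLast?_cons_cons]
      obtain ⟨w, hw, hwb, hA⟩ := ih hc.tail hn.of_cons (by simp) b hb'
      exact ⟨w, by simp [hw], hwb, hA⟩

end Aux

theorem stmt13 [Fintype V] (A : V → V → Prop) (hT : IsTournament A)
    (hn : 3 ≤ Fintype.card V) (hγ : 1 < domNum A) :
    watchman A = domNum A ∨ watchman A = domNum A + 1 := by
  classical
  set W := {n | ∃ l, IsCDW A l ∧ walkLength l = n} with hWdef
  -- The domination-number set is nonempty, get a minimum dominating set S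
  have hDne : {n | ∃ S : Set V, S.ncard = n ∧ Dom A S}.Nonempty :=
    ⟨(Set.univ : Set V).ncard, Set.univ, rfl, fun v => Or.inl trivial⟩
  have hmem := Nat.sInf_mem hDne
  obtain ⟨S, hScard0, hSdom⟩ := hmem
  have hScard : S.ncard = domNum A := hScard0
  have hγ2 : 2 ≤ S.ncard := by rw [hScard]; omega
  have hSfin : S.Finite := Set.toFinite S
  -- Hamilton path on S
  obtain ⟨l, hnd, hfs, hch⟩ := ham hT hSfin.toFinset
  have lmem : ∀ v, v ∈ l ↔ v ∈ S := by
    intro v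
    rw [← List.mem_toFinset, hfs]
    exact Set.Finite.mem_toFinset _
  have llen : l.length = S.ncard := by
    rw [← List.toFinset_card_of_nodup hnd, hfs, Set.ncard_eq_toFinset_card S hSfin]
  have hl2 : 2 ≤ l.length := llen ▸ hγ2
  have hlne : l ≠ [] := by intro h; rw [h] at hl2; simp at hl2
  set a := l.head hlne with ha
  set b := l.getLast hlne with hb
  have hha : l.head? = some a := List.head?_eq_head hlne
  have hhb : l.getLast? = some b := List.getLast?_eq_getLast hlne
  have haS : a ∈ S := (lmem a).mp (List.head_mem hlne)
  have hbS : b ∈ S := (lmem b).mp (List.getLast_mem hlne)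
  have hab : a ≠ b := by
    intro h
    obtain ⟨x, t, rfl⟩ := List.exists_cons_of_ne_nil hlne
    have htne : t ≠ [] := by
      intro ht; rw [ht] at hl2; simp at hl2
    have : b ∈ t := by
      rw [hb, List.getLast_cons htne]
      exact List.getLast_mem htne
    rw [← h] at this
    have : a ∈ t := this
    rw [ha] at this
    simp at this
    exact (List.nodup_cons.mp hnd).1 this
  have hSsub : S ⊆ {v | v ∈ l} := fun v hv => (lmem v).mpr hv
  have hDomL : Dom A {v | v ∈ l} := by
    intro v
    rcases hSdom v with h | ⟨u, hu, hA⟩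
    · exact Or.inl (hSsub h)
    · exact Or.inr ⟨u, hSsub hu, hA⟩
  -- membership of domNum A or domNum A+1 in W
  have hmemW : domNum A ∈ W ∨ domNum A + 1 ∈ W := by
    by_cases hba : A b a
    · left
      refine ⟨l, ⟨⟨hlne, hch, Or.inr ?_⟩, hDomL⟩, ?_⟩
      · intro a' b' ha' hb'
        rw [hha] at ha'; rw [hhb] at hb'
        cases ha'; cases hb'; exact hba
      · rw [walkLength, if_neg (by omega), llen, hScard]
    · have hAab : A a b := (hT.2 a b hab).mpr hba
      by_cases hu : ∃ u, A b u ∧ A u a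
      · right
        obtain ⟨u, hbu, hua⟩ := hu
        refine ⟨l ++ [u], ⟨⟨by simp, ?_, Or.inr ?_⟩, ?_⟩, ?_⟩
        · refine List.isChain_append.mpr ?_
          refine ⟨hch, List.isChain_singleton u, ?_⟩
          intro x hx y hy
          rw [hhb] at hx; simp at hx hy
          subst hx; subst hy; exact hbu
        · intro a' b' ha' hb'
          rw [List.head?_append_of_ne_nil _ hlne, hha] at ha'
          rw [List.getLast?_concat] at hb'
          cases ha'; cases hb'; exact hua
        · intro v
          rcases hDomL v with h | ⟨w, hw, hA⟩
          · exact Or.inl (by simpa using Or.inl h)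
          · exact Or.inr ⟨w, by simpa using Or.inl hw, hA⟩
        · rw [walkLength, if_neg (by simp only [List.length_append, List.length_cons, List.length_nil]; omega)]
          simp [llen, hScard]
      · -- contradiction: S \ {b} dominates
        exfalso
        push_neg at hu
        have hdom' : Dom A (S \ {b}) := by
          intro v
          rcases hSdom v with hv | ⟨u, huS, hAuv⟩
          · by_cases hvb : v = b
            · subst hvb
              obtain ⟨w, hwl, hwb, hAwb⟩ := exists_pred_last l hch hnd hl2 b hhb
              exact Or.inr ⟨w, ⟨(lmem w).mp hwl, hwb⟩, hAwb⟩
            · exact Or.inl ⟨hv, hvb⟩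
          · by_cases hub : u = b
            · subst hub
              have hva : v ≠ a := by rintro rfl; exact hba hAuv
              have hnva : ¬ A v a := hu v hAuv
              have hAav : A a v := (hT.2 a v (Ne.symm hva)).mpr (by
                intro hva'
                exact hnva hva')
              exact Or.inr ⟨a, ⟨haS, hab⟩, hAav⟩
            · exact Or.inr ⟨u, ⟨huS, hub⟩, hAuv⟩
        have hcard' : (S \ {b}).ncard = domNum A - 1 := by
          rw [Set.ncard_diff_singleton_of_mem hbS, hScard]
        have : domNum A ≤ domNum A - 1 := Nat.sInf_le ⟨S \ {b}, hcard', hdom'⟩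
        omega
  -- lower bound: every element of W is ≥ domNum A
  have hlow : ∀ n ∈ W, domNum A ≤ n := by
    rintro n ⟨m, ⟨⟨hmne, hmch, -⟩, hmdom⟩, rfl⟩
    by_cases h1 : m.length = 1
    · exfalso
      obtain ⟨x, rfl⟩ := List.length_eq_one_iff.mp h1
      have : ({v | v ∈ [x]} : Set V) = {x} := by ext v; simp
      have h1' : domNum A ≤ 1 := Nat.sInf_le ⟨{v | v ∈ [x]}, by rw [this]; simp, hmdom⟩
      omega
    · rw [walkLength, if_neg h1]
      have hset : ({v | v ∈ m} : Set V) = ↑m.toFinset := by ext v; simp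
      have : domNum A ≤ m.toFinset.card :=
        Nat.sInf_le ⟨{v | v ∈ m}, by rw [hset, Set.ncard_coe_finset], hmdom⟩
      exact this.trans (List.toFinset_card_le m)
  have hWne : W.Nonempty := by rcases hmemW with h | h; exacts [⟨_, h⟩, ⟨_, h⟩]
  have hlow' : domNum A ≤ sInf W := hlow _ (Nat.sInf_mem hWne)
  have hwdef : watchman A = sInf W := rfl
  rcases hmemW with h | h
  · have := Nat.sInf_le h; rw [hwdef]; omega
  · have := Nat.sInf_le h; rw [hwdef]; omega
end

section
/- For a tournament T with γ(T) > 1, w(T) = γ(T) if and only if there exists a minimum dominating set D of T such that the subtournament induced by D is strongly connected. -/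
variable {V : Type*}

section Aux
open List
lemma getLast?_cons_some (a : V) (u : List V) : ∃ x, (a::u).getLast? = some x :=
  Option.isSome_iff_exists.mp (List.getLast?_isSome.mpr (by simp))

lemma dup_decomp {l : List V} (h : ¬ l.Nodup) :
    ∃ (a : V) (s t u : List V), l = s ++ a :: (t ++ a :: u) := by
  induction l with
  | nil => simp at h
  | cons b r ih =>
    rw [nodup_cons] at h
    push_neg at h
    by_cases hb : b ∈ r
    · obtain ⟨t, u, rfl⟩ := List.append_of_mem hb
      exact ⟨b, [], t, u, rfl⟩
    · obtain ⟨a, s, t, u, rfl⟩ := ih (h hb)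
      exact ⟨a, b :: s, t, u, rfl⟩

lemma exists_nodup_chain'_aux {R : V → V → Prop} :
    ∀ (n : ℕ) (l : List V), l.length ≤ n → l ≠ [] → l.Chain' R →
    ∃ l', l' ≠ [] ∧ l'.Nodup ∧ l'.Chain' R ∧ l'.head? = l.head? ∧ l'.getLast? = l.getLast? := by
  intro n
  induction n with
  | zero => intro l hl hne _; interval_cases h : l.length <;> simp_all
  | succ n ih =>
    intro l hl hne hc
    by_cases hnd : l.Nodup
    · exact ⟨l, hne, hnd, hc, rfl, rfl⟩
    · obtain ⟨a, s, t, u, rfl⟩ := dup_decomp hnd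
      have hc' : (s ++ a :: u).Chain' R := by
        unfold Chain' at hc ⊢; rw [isChain_append] at hc ⊢
        refine ⟨hc.1, ?_, ?_⟩
        · exact hc.2.1.suffix ⟨a :: t, by simp⟩
        · simpa using hc.2.2
      have hlen : (s ++ a :: u).length ≤ n := by
        simp only [length_append, length_cons] at hl ⊢; omega
      obtain ⟨l', h1, h2, h3, h4, h5⟩ := ih _ hlen (by simp) hc'
      refine ⟨l', h1, h2, h3, ?_, ?_⟩
      · rw [h4]; cases s <;> simp
      · rw [h5, show a :: (t ++ a :: u) = (a::t) ++ (a::u) from by simp,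
          getLast?_append, getLast?_append, getLast?_append]
        obtain ⟨x, hx⟩ := getLast?_cons_some a u
        simp [hx]

lemma exists_nodup_chain' {R : V → V → Prop} {l : List V} (hne : l ≠ []) (hc : l.Chain' R) :
    ∃ l', l' ≠ [] ∧ l'.Nodup ∧ l'.Chain' R ∧ l'.head? = l.head? ∧ l'.getLast? = l.getLast? :=
  exists_nodup_chain'_aux l.length l le_rfl hne hc


lemma pairL1 {p : V → Prop} :
    ∀ (t : List V) (a : V), ¬ p a → (∃ y ∈ t, p y) →
    ∃ l₁ x y l₂, a :: t = l₁ ++ x :: y :: l₂ ∧ ¬ p x ∧ p y := by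
  intro t
  induction t with
  | nil => simp
  | cons b t' ih =>
    intro a ha hy
    by_cases hb : p b
    · exact ⟨[], a, b, t', rfl, ha, hb⟩
    · obtain ⟨y, hyl, hpy⟩ := hy
      have : y ∈ t' := by
        rcases mem_cons.mp hyl with rfl | h
        · exact absurd hpy hb
        · exact h
      obtain ⟨l₁, x, y', l₂, heq, h1, h2⟩ := ih b hb ⟨y, this, hpy⟩
      exact ⟨a :: l₁, x, y', l₂, by rw [cons_append, ← heq], h1, h2⟩

lemma pairL2 {p : V → Prop} :
    ∀ (l : List V) (hne : l ≠ []), (∃ x ∈ l, ¬ p x) → p (l.getLast hne) →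
    ∃ l₁ x y l₂, l = l₁ ++ x :: y :: l₂ ∧ ¬ p x ∧ p y := by
  intro l
  induction l with
  | nil => simp
  | cons a t ih =>
    intro hne hx hl
    by_cases ha : p a
    · obtain ⟨x, hxl, hpx⟩ := hx
      have hxt : x ∈ t := by
        rcases mem_cons.mp hxl with rfl | h
        · exact absurd ha hpx
        · exact h
      have htne : t ≠ [] := by rintro rfl; simp at hxt
      have hlt : p (t.getLast htne) := by
        rwa [getLast_cons htne] at hl
      obtain ⟨l₁, x', y, l₂, heq, h1, h2⟩ := ih htne ⟨x, hxt, hpx⟩ hlt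
      exact ⟨a :: l₁, x', y, l₂, by rw [cons_append, ← heq], h1, h2⟩
    · have htne : t ≠ [] := by
        rintro rfl
        simp only [getLast_singleton] at hl
        exact ha hl
      have : ∃ y ∈ t, p y := ⟨t.getLast htne, getLast_mem htne, by rwa [getLast_cons htne] at hl⟩
      exact pairL1 t a ha this

lemma split_or_wrap {p : V → Prop} (l : List V) (hne : l ≠ [])
    (hx : ∃ x ∈ l, ¬ p x) (hy : ∃ y ∈ l, p y) :
    (∃ l₁ x y l₂, l = l₁ ++ x :: y :: l₂ ∧ ¬ p x ∧ p y) ∨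
      (¬ p (l.getLast hne) ∧ p (l.head hne)) := by
  by_cases hh : p (l.head hne)
  · by_cases hl : p (l.getLast hne)
    · exact Or.inl (pairL2 l hne hx hl)
    · exact Or.inr ⟨hl, hh⟩
  · left
    obtain ⟨a, t, rfl⟩ : ∃ a t, l = a :: t := ⟨l.head hne, l.tail, (cons_head_tail hne).symm⟩
    obtain ⟨y, hyl, hpy⟩ := hy
    have : y ∈ t := by
      rcases mem_cons.mp hyl with rfl | h
      · exact absurd hpy (by simpa using hh)
      · exact h
    exact pairL1 t a (by simpa using hh) ⟨y, this, hpy⟩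



def IsCyc (B : V → V → Prop) (l : List V) : Prop :=
  l ≠ [] ∧ l.Nodup ∧ l.Chain' B ∧
    ∀ a b, l.head? = some a → l.getLast? = some b → B b a

/-- insert v in the middle of a cycle -/
lemma cyc_insert_mid {B : V → V → Prop} {l₁ l₂ : List V} {x y v : V}
    (hc : IsCyc B (l₁ ++ x :: y :: l₂)) (hv : v ∉ l₁ ++ x :: y :: l₂)
    (hxv : B x v) (hvy : B v y) :
    IsCyc B (l₁ ++ x :: v :: y :: l₂) ∧
      (l₁ ++ x :: v :: y :: l₂).length = (l₁ ++ x :: y :: l₂).length + 1 ∧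
      ∀ w ∈ l₁ ++ x :: y :: l₂, w ∈ l₁ ++ x :: v :: y :: l₂ := by
  obtain ⟨hne, hnd, hch, hwrap⟩ := hc
  refine ⟨⟨by simp, ?_, ?_, ?_⟩, by simp only [length_append, length_cons]; omega, ?_⟩
  · have hperm : (l₁ ++ x :: v :: y :: l₂).Perm (v :: (l₁ ++ x :: y :: l₂)) := by
      calc l₁ ++ x :: v :: y :: l₂ = (l₁ ++ [x]) ++ v :: (y :: l₂) := by simp
      _ ~ v :: ((l₁ ++ [x]) ++ y :: l₂) := perm_middle (a:=v) (l₁:=l₁++[x]) (l₂:=y::l₂)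
      _ = v :: (l₁ ++ x :: y :: l₂) := by simp
    rw [hperm.nodup_iff, nodup_cons]
    exact ⟨hv, hnd⟩
  · unfold Chain' at hch ⊢; rw [isChain_append] at hch ⊢
    refine ⟨hch.1, ?_, by simpa using hch.2.2⟩
    rw [isChain_cons_cons, isChain_cons_cons]
    have := hch.2.1
    rw [isChain_cons_cons] at this
    exact ⟨hxv, hvy, this.2⟩
  · intro a b ha hb
    apply hwrap a b
    · rw [head?_append] at ha ⊢
      simpa using ha
    · obtain ⟨z, hz⟩ := getLast?_cons_some y l₂
      have e1 : (l₁ ++ x :: v :: y :: l₂).getLast? = some z := by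
        rw [show l₁ ++ x :: v :: y :: l₂ = (l₁ ++ [x, v]) ++ (y :: l₂) from by simp,
          getLast?_append, hz]; rfl
      have e2 : (l₁ ++ x :: y :: l₂).getLast? = some z := by
        rw [show l₁ ++ x :: y :: l₂ = (l₁ ++ [x]) ++ (y :: l₂) from by simp,
          getLast?_append, hz]; rfl
      rw [e1] at hb; rw [e2]; exact hb
  · intro w hw
    simp only [mem_append, mem_cons] at hw ⊢
    tauto

lemma cyc_append {B : V → V → Prop} {l m : List V} (hc : IsCyc B l) (hm : m ≠ [])
    (hmn : m.Nodup) (hmc : m.Chain' B) (hdisj : ∀ w ∈ m, w ∉ l)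
    (h1 : ∀ a b, l.getLast? = some a → m.head? = some b → B a b)
    (h2 : ∀ a b, m.getLast? = some a → l.head? = some b → B a b) :
    IsCyc B (l ++ m) := by
  obtain ⟨hne, hnd, hch, _⟩ := hc
  refine ⟨by simp [hne], ?_, ?_, ?_⟩
  · rw [nodup_append]
    exact ⟨hnd, hmn, fun a ha b hb hab => by subst hab; exact hdisj a hb ha⟩
  · unfold Chain'; rw [isChain_append]
    exact ⟨hch, hmc, fun a ha b hb => h1 a b ha hb⟩
  · intro a b ha hb
    rw [head?_append] at ha
    rw [getLast?_append] at hb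
    obtain ⟨c, hcl⟩ : ∃ c, l.head? = some c := Option.isSome_iff_exists.mp (isSome_head?.mpr hne)
    obtain ⟨d, hdl⟩ : ∃ d, m.getLast? = some d :=
      Option.isSome_iff_exists.mp (getLast?_isSome.mpr hm)
    rw [hcl, show (Option.some c).or m.head? = some c from rfl] at ha
    rw [hdl, show (Option.some d).or l.getLast? = some d from rfl] at hb
    injection ha with ha; injection hb with hb
    subst ha; subst hb
    exact h2 d c hdl hcl

lemma exists_cycle {B : V → V → Prop} [Fintype V]
    (hT : ∀ u v : V, u ≠ v → (B u v ↔ ¬ B v u))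
    (hstrong : ∀ u v : V, Relation.ReflTransGen B u v) (hcard : 1 < Fintype.card V) :
    ∃ l, IsCyc B l := by
  obtain ⟨u, v, huv⟩ := Fintype.exists_pair_of_one_lt_card hcard
  -- wlog B u v
  have key : ∀ u v : V, u ≠ v → B u v → ∃ l, IsCyc B l := by
    intro u v huv harc
    obtain ⟨l0, hch, hlast⟩ := List.exists_isChain_cons_of_relationReflTransGen (hstrong v u)
    have hch' : (v :: l0).Chain' B := hch
    obtain ⟨p, hp1, hp2, hp3, hp4, hp5⟩ := exists_nodup_chain' (l := v :: l0) (by simp) hch'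
    refine ⟨p, hp1, hp2, hp3, ?_⟩
    intro a b ha hb
    rw [hp4] at ha
    simp only [head?_cons, Option.some.injEq] at ha
    have : (v :: l0).getLast? = some u := by
      rw [getLast?_eq_getLast (l := v :: l0) (by simp), hlast]
    rw [hp5, this, Option.some.injEq] at hb
    subst ha; subst hb
    exact harc
  by_cases h : B u v
  · exact key u v huv h
  · exact key v u huv.symm ((hT v u huv.symm).mpr h)

theorem camion {B : V → V → Prop} [Fintype V]
    (hT : IsTournament B)
    (hstrong : ∀ u v : V, Relation.ReflTransGen B u v) (hcard : 1 < Fintype.card V) :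
    ∃ l, IsCyc B l ∧ ∀ w : V, w ∈ l := by
  classical
  obtain ⟨hirr, htot⟩ := hT
  -- asymmetry
  have hasym : ∀ u v : V, B u v → ¬ B v u := by
    intro u v h
    by_cases huv : u = v
    · subst huv; exact absurd h (hirr u)
    · exact (htot u v huv).mp h
  have htotal : ∀ u v : V, u ≠ v → ¬ B u v → B v u := by
    intro u v huv h
    exact (htot v u (Ne.symm huv)).mpr h
  -- set of cycle lengths
  set Lens : Set ℕ := {n | ∃ l, IsCyc B l ∧ l.length = n} with hLens
  have hLne : Lens.Nonempty := by
    obtain ⟨l, hl⟩ := exists_cycle htot hstrong hcard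
    exact ⟨l.length, l, hl, rfl⟩
  have hLbdd : BddAbove Lens := by
    refine ⟨Fintype.card V, ?_⟩
    rintro n ⟨l, hl, rfl⟩
    exact hl.2.1.length_le_card
  obtain ⟨l, hl, hlen⟩ := Nat.sSup_mem hLne hLbdd
  have hmax : ∀ l', IsCyc B l' → l'.length ≤ l.length := by
    intro l' hl'
    rw [hlen]
    exact le_csSup hLbdd ⟨l', hl', rfl⟩
  refine ⟨l, hl, ?_⟩
  by_contra hcov
  push_neg at hcov
  -- key: no vertex outside has both in- and out-neighbours on l
  have hnoext : ∀ w, w ∉ l → ¬((∃ x ∈ l, B x w) ∧ (∃ y ∈ l, B w y)) := by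
    rintro w hw ⟨hx, hy⟩
    have hx' : ∃ x ∈ l, ¬ B w x := by
      obtain ⟨x, hxl, hxw⟩ := hx
      exact ⟨x, hxl, hasym x w hxw⟩
    rcases split_or_wrap (p := fun y => B w y) l hl.1 hx' hy with
      ⟨l₁, x, y, l₂, heq, hpx, hpy⟩ | ⟨hlast, hhead⟩
    · have hxw : B x w := by
        refine htotal w x ?_ hpx
        rintro rfl
        exact hw (heq ▸ (by simp))
      have hwmem : w ∉ l₁ ++ x :: y :: l₂ := heq ▸ hw
      obtain ⟨hc', hlen', _⟩ := cyc_insert_mid (heq ▸ hl) hwmem hxw hpy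
      have := hmax _ hc'
      rw [hlen', ← heq] at this
      omega
    · -- append w at the end
      have hlw : B (l.getLast hl.1) w := htotal w _ (by rintro rfl; exact hw (getLast_mem hl.1)) hlast
      have hc' : IsCyc B (l ++ [w]) := by
        refine cyc_append hl (by simp) (by simp) (List.IsChain.singleton _) (by simpa using hw) ?_ ?_
        · intro a b ha hb
          simp only [head?_cons, Option.some.injEq] at hb
          rw [getLast?_eq_getLast hl.1, Option.some.injEq] at ha
          subst ha; subst hb; exact hlw
        · intro a b ha hb
          simp only [getLast?_singleton, Option.some.injEq] at ha
          rw [head?_eq_head hl.1, Option.some.injEq] at hb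
          subst ha; subst hb; exact hhead
      have := hmax _ hc'
      simp at this
  -- S and R
  set S : V → Prop := fun w => w ∉ l ∧ ∀ c ∈ l, B w c with hS
  set R : V → Prop := fun w => w ∉ l ∧ ∀ c ∈ l, B c w with hR
  have hSR : ∀ w, w ∉ l → S w ∨ R w := by
    intro w hw
    have := hnoext w hw
    push_neg at this
    by_cases h1 : ∃ x ∈ l, B x w
    · obtain ⟨y, hyl, hyw⟩ := h1
      right
      exact ⟨hw, fun c hc =>
        htotal w c (by rintro rfl; exact hw hc) (this ⟨y, hyl, hyw⟩ c hc)⟩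
    · push_neg at h1
      left
      refine ⟨hw, fun c hc => ?_⟩
      exact htotal c w (by rintro rfl; exact hw hc) (h1 c hc)
  obtain ⟨v, hv⟩ := hcov
  have hhead_mem : l.head hl.1 ∈ l := head_mem hl.1
  by_cases hSex : ∃ s, S s
  · obtain ⟨s, hs⟩ := hSex
    by_cases hRSarc : ∃ r s', R r ∧ S s' ∧ B r s'
    · obtain ⟨r, s', hr, hs', hrs⟩ := hRSarc
      have hrs' : r ≠ s' := by
        rintro rfl
        exact hasym _ _ (hr.2 _ hhead_mem) (hs'.2 _ hhead_mem)
      have hc' : IsCyc B (l ++ [r, s']) := by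
        refine cyc_append hl (by simp) (by simp [hrs']) (List.IsChain.cons_cons hrs (List.IsChain.singleton _)) ?_ ?_ ?_
        · intro w hw
          simp only [mem_cons, mem_singleton, not_mem_nil, or_false] at hw
          rcases hw with rfl | rfl
          exacts [hr.1, hs'.1]
        · intro a b ha hb
          simp only [head?_cons, Option.some.injEq] at hb
          rw [getLast?_eq_getLast hl.1, Option.some.injEq] at ha
          subst ha; subst hb
          exact hr.2 _ (getLast_mem hl.1)
        · intro a b ha hb
          have : ([r, s'] : List V).getLast? = some s' := rfl
          rw [this, Option.some.injEq] at ha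
          rw [head?_eq_head hl.1, Option.some.injEq] at hb
          subst ha; subst hb
          exact hs'.2 _ hhead_mem
      have := hmax _ hc'
      simp at this
    · -- S is closed under predecessors
      have hclosed : ∀ a b, B a b → S b → S a := by
        intro a b hab hb
        have hal : a ∉ l := by
          intro hal
          exact hasym a b hab (hb.2 a hal)
        rcases hSR a hal with h | h
        · exact h
        · exact absurd ⟨a, b, h, hb, hab⟩ hRSarc
      have : S (l.head hl.1) := by
        refine Relation.ReflTransGen.head_induction_on (hstrong (l.head hl.1) s) hs ?_
        intro a c h' _ hc
        exact hclosed a c h' hc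
      exact this.1 hhead_mem
  · -- no vertex in S, so all outside vertices are in R, closed under successors
    have hRv : R v := (hSR v hv).resolve_left (fun h => hSex ⟨v, h⟩)
    have hclosed : ∀ a b, B a b → R a → R b := by
      intro a b hab ha
      have hbl : b ∉ l := by
        intro hbl
        exact hasym a b hab (ha.2 b hbl)
      exact (hSR b hbl).resolve_left (fun h => hSex ⟨b, h⟩)
    have key : ∀ w, Relation.ReflTransGen B v w → R w := by
      intro w h
      induction h with
      | refl => exact hRv
      | tail _ step ih => exact hclosed _ _ step ih
    exact (key _ (hstrong v (l.head hl.1))).1 hhead_mem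

section Walk
variable {A : V → V → Prop} {D : Set V}

lemma rtg_head_to {l : List V} (hc : l.Chain' A) (hsub : ∀ x ∈ l, x ∈ D) (hne : l ≠ [])
    {x : V} (hx : x ∈ l) :
    Relation.ReflTransGen (fun a b => a ∈ D ∧ b ∈ D ∧ A a b) (l.head hne) x := by
  induction l with
  | nil => simp at hne
  | cons a t ih =>
    rcases mem_cons.mp hx with rfl | hxt
    · exact Relation.ReflTransGen.refl
    · have htne : t ≠ [] := by rintro rfl; simp at hxt
      have step : A a (t.head htne) := by
        obtain ⟨b, t', rfl⟩ : ∃ b t', t = b :: t' := ⟨t.head htne, t.tail, (cons_head_tail htne).symm⟩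
        exact (isChain_cons_cons.mp hc).1
      have : Relation.ReflTransGen (fun a b => a ∈ D ∧ b ∈ D ∧ A a b) (t.head htne) x :=
        ih (hc.tail) (fun y hy => hsub y (mem_cons_of_mem a hy)) htne hxt
      exact Relation.ReflTransGen.head
        ⟨hsub a (by simp), hsub _ (mem_cons_of_mem a (head_mem htne)), step⟩ this

lemma rtg_to_last : ∀ {l : List V}, l.Chain' A → (∀ x ∈ l, x ∈ D) → ∀ (hne : l ≠ [])
    {x : V}, x ∈ l →
    Relation.ReflTransGen (fun a b => a ∈ D ∧ b ∈ D ∧ A a b) x (l.getLast hne) := by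
  intro l
  induction l with
  | nil => intro _ _ hne; simp at hne
  | cons a t ih =>
    intro hc hsub hne x hx
    rcases eq_or_ne t [] with rfl | htne
    · simp only [mem_singleton] at hx
      subst hx
      exact Relation.ReflTransGen.refl
    · rw [getLast_cons htne]
      rcases mem_cons.mp hx with rfl | hxt
      · have step : A x (t.head htne) := by
          obtain ⟨b, t', rfl⟩ : ∃ b t', t = b :: t' := ⟨t.head htne, t.tail, (cons_head_tail htne).symm⟩
          exact (isChain_cons_cons.mp hc).1
        refine Relation.ReflTransGen.head
          ⟨hsub x (by simp), hsub _ (mem_cons_of_mem x (head_mem htne)), step⟩ ?_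
        exact ih hc.tail (fun y hy => hsub y (mem_cons_of_mem x hy)) htne (head_mem htne)
      · exact ih hc.tail (fun y hy => hsub y (mem_cons_of_mem a hy)) htne hxt

lemma lift_rtg {u : V} (hu : u ∈ D) :
    ∀ {v : V}, Relation.ReflTransGen (fun a b => a ∈ D ∧ b ∈ D ∧ A a b) u v →
    ∀ (hv : v ∈ D), Relation.ReflTransGen (fun a b : D => A a.1 b.1) ⟨u, hu⟩ ⟨v, hv⟩ := by
  intro v h
  induction h with
  | refl => intro hv; exact Relation.ReflTransGen.refl
  | tail _ step ih =>
    intro hv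
    exact Relation.ReflTransGen.tail (ih step.1) step.2.2

end Walk

/-- Hamilton cycle on a strongly connected "dominating set" -/
lemma exists_ham {A : V → V → Prop} [Fintype V] (hT : IsTournament A) {D : Set V}
    (hSC : StronglyConnectedOn A D) (hcard : 1 < D.ncard) :
    ∃ l : List V, l ≠ [] ∧ l.Nodup ∧ l.Chain' A ∧
      (∀ a b, l.head? = some a → l.getLast? = some b → A b a) ∧
      {v | v ∈ l} = D ∧ l.length = D.ncard := by
  classical
  haveI : Fintype ↥D := (Set.toFinite D).fintype
  have hcardD : Fintype.card ↥D = D.ncard := by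
    rw [← Nat.card_coe_set_eq, Nat.card_eq_fintype_card]
  set B : ↥D → ↥D → Prop := fun a b => A a.1 b.1 with hB
  have hTB : IsTournament B := by
    constructor
    · intro v; exact hT.1 v.1
    · intro u v huv
      exact hT.2 u.1 v.1 (fun h => huv (Subtype.ext h))
  have hstrong : ∀ u v : ↥D, Relation.ReflTransGen B u v := by
    rintro ⟨u, hu⟩ ⟨v, hv⟩
    exact lift_rtg hu (hSC u hu v hv) hv
  obtain ⟨l', hl', hcov⟩ := camion hTB hstrong (hcardD ▸ hcard)
  refine ⟨l'.map Subtype.val, by intro h; rw [map_eq_nil_iff] at h; exact hl'.1 h, hl'.2.1.map Subtype.val_injective, ?_, ?_, ?_, ?_⟩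
  · unfold Chain'; rw [isChain_map]; exact hl'.2.2.1
  · intro a b ha hb
    rw [head?_map] at ha
    rw [getLast?_map] at hb
    obtain ⟨a', ha', rfl⟩ := Option.map_eq_some_iff.mp ha
    obtain ⟨b', hb', rfl⟩ := Option.map_eq_some_iff.mp hb
    exact hl'.2.2.2 a' b' ha' hb'
  · ext v
    simp only [Set.mem_setOf_eq, mem_map]
    constructor
    · rintro ⟨w, _, rfl⟩; exact w.2
    · intro hv; exact ⟨⟨v, hv⟩, hcov _, rfl⟩
  · rw [length_map, ← hcardD]
    have : l'.toFinset = Finset.univ := by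
      ext w; simp [hcov w]
    rw [← toFinset_card_of_nodup hl'.2.1, this, Finset.card_univ]

end Aux

open List in
theorem stmt15 [Fintype V] (A : V → V → Prop) (hT : IsTournament A)
    (hγ : 1 < domNum A) :
    watchman A = domNum A ↔
      ∃ D : Set V, D.ncard = domNum A ∧ Dom A D ∧ StronglyConnectedOn A D := by
  classical
  have key_lb : ∀ n ∈ {n | ∃ l, IsCDW A l ∧ walkLength l = n}, domNum A ≤ n := by
    rintro n ⟨l, ⟨⟨hne, hch, hwrap⟩, hdom⟩, rfl⟩
    have hset : {v | v ∈ l} = (↑l.toFinset : Set V) := by ext v; simp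
    have hle : ({v | v ∈ l} : Set V).ncard ≤ l.length := by
      rw [hset, Set.ncard_coe_finset]; exact l.toFinset_card_le
    have hγle : domNum A ≤ ({v | v ∈ l} : Set V).ncard := Nat.sInf_le ⟨_, rfl, hdom⟩
    by_cases h1 : l.length = 1
    · exact absurd (le_trans hγle (h1 ▸ hle)) (by omega)
    · rw [walkLength, if_neg h1]; exact le_trans hγle hle
  constructor
  · intro hw
    have hne' : {n | ∃ l, IsCDW A l ∧ walkLength l = n}.Nonempty := by
      by_contra h
      rw [Set.not_nonempty_iff_eq_empty] at h
      rw [watchman, h, Nat.sInf_empty] at hw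
      omega
    obtain ⟨l, hcdw, hlen⟩ := Nat.sInf_mem hne'
    obtain ⟨⟨hne, hch, hwrap⟩, hdom⟩ := hcdw
    rw [show sInf {n | ∃ l, IsCDW A l ∧ walkLength l = n} = watchman A from rfl, hw] at hlen
    have h1 : l.length ≠ 1 := by
      intro h1
      rw [walkLength, if_pos h1] at hlen
      omega
    rw [walkLength, if_neg h1] at hlen
    have hset : {v | v ∈ l} = (↑l.toFinset : Set V) := by ext v; simp
    have hle : ({v | v ∈ l} : Set V).ncard ≤ l.length := by
      rw [hset, Set.ncard_coe_finset]; exact l.toFinset_card_le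
    have hγle : domNum A ≤ ({v | v ∈ l} : Set V).ncard := Nat.sInf_le ⟨_, rfl, hdom⟩
    refine ⟨{v | v ∈ l}, by omega, hdom, ?_⟩
    have hwrap' := hwrap.resolve_left h1
    intro u hu v hv
    have hsub : ∀ x ∈ l, x ∈ {v | v ∈ l} := fun x hx => hx
    have hp1 := rtg_to_last (D := {v | v ∈ l}) hch hsub hne hu
    have hp2 := rtg_head_to (D := {v | v ∈ l}) hch hsub hne hv
    have harc : A (l.getLast hne) (l.head hne) :=
      hwrap' _ _ (head?_eq_head hne) (getLast?_eq_getLast hne)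
    exact hp1.trans (Relation.ReflTransGen.head
      ⟨getLast_mem hne, head_mem hne, harc⟩ hp2)
  · rintro ⟨D, hDcard, hDdom, hDsc⟩
    have hcard2 : 1 < D.ncard := hDcard ▸ hγ
    obtain ⟨l, hne, hnd, hch, hwrap, hset, hlen⟩ := exists_ham hT hDsc hcard2
    have hlval : l.length = domNum A := by rw [hlen, hDcard]
    have hmem : domNum A ∈ {n | ∃ l, IsCDW A l ∧ walkLength l = n} := by
      refine ⟨l, ⟨⟨hne, hch, Or.inr hwrap⟩, by rw [hset]; exact hDdom⟩, ?_⟩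
      rw [walkLength, if_neg (by omega), hlval]
    refine le_antisymm (Nat.sInf_le hmem) (key_lb _ (Nat.sInf_mem ⟨_, hmem⟩))
end

section
/- Let T be a tournament of order n that is not strongly connected with γ(T) = k ≥ 3. Then there exists a tournament T_s of order n+1 containing T as a subtournament such that T_s is strongly connected and γ(T_s) = k. (Construction: take a Hamilton path of T starting at u, add a new vertex w with arcs from all vertices except u to w and the arc (w,u).) -/
variable {V : Type*}

lemma myExistsMin (R : V → V → Prop) (hrefl : ∀ a, R a a)
    (htrans : ∀ {a b c}, R a b → R b c → R a c)
    (htot : ∀ a b, R a b ∨ R b a) (s : Finset V) (hs : s.Nonempty) :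
    ∃ u ∈ s, ∀ v ∈ s, R u v := by
  classical
  induction s using Finset.induction with
  | empty => exact absurd hs (by simp)
  | @insert a s ha ih =>
    rcases s.eq_empty_or_nonempty with rfl | hsn
    · exact ⟨a, by simp, by simp [hrefl]⟩
    · obtain ⟨u, hu, hmin⟩ := ih hsn
      rcases htot u a with h | h
      · exact ⟨u, Finset.mem_insert_of_mem hu, fun v hv => by
          rcases Finset.mem_insert.1 hv with rfl | hv
          · exact h
          · exact hmin v hv⟩
      · exact ⟨a, Finset.mem_insert_self a s, fun v hv => by
          rcases Finset.mem_insert.1 hv with rfl | hv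
          · exact hrefl _
          · exact htrans h (hmin v hv)⟩

def extT (A : V → V → Prop) (u : V) : Option V → Option V → Prop
  | some a, some b => A a b
  | some a, none => a ≠ u
  | none, some b => b = u
  | none, none => False

theorem stmt17 [Fintype V] (A : V → V → Prop) (hT : IsTournament A)
    (hns : ¬ ∀ u v : V, Relation.ReflTransGen A u v)
    (k : ℕ) (hk : 3 ≤ k) (hγ : domNum A = k) :
    ∃ A' : Option V → Option V → Prop, IsTournament A' ∧
      (∀ u v : V, A' (some u) (some v) ↔ A u v) ∧
      (∀ u v : Option V, Relation.ReflTransGen A' u v) ∧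
      domNum A' = k := by
  classical
  have hDuniv : Dom A (Set.univ : Set V) := fun v => Or.inl (Set.mem_univ v)
  have hcard : domNum A ≤ Fintype.card V :=
    Nat.sInf_le ⟨Set.univ, by simp [Set.ncard_univ, Nat.card_eq_fintype_card], hDuniv⟩
  have hcard3 : 3 ≤ Fintype.card V := by omega
  have hne : Nonempty V := Fintype.card_pos_iff.mp (by omega)
  have hlow : ∀ S : Set V, Dom A S → k ≤ S.ncard := by
    intro S hS
    rw [← hγ]
    exact Nat.sInf_le ⟨S, rfl, hS⟩
  have hmem : domNum A ∈ {n | ∃ S : Set V, S.ncard = n ∧ Dom A S} :=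
    Nat.sInf_mem ⟨Fintype.card V, Set.univ,
      by simp [Set.ncard_univ, Nat.card_eq_fintype_card], hDuniv⟩
  rw [hγ] at hmem
  obtain ⟨S, hScard, hSdom⟩ := hmem
  -- totality of reachability
  have htot : ∀ a b : V, Relation.ReflTransGen A a b ∨ Relation.ReflTransGen A b a := by
    intro a b
    by_cases hab : a = b
    · subst hab; exact Or.inl Relation.ReflTransGen.refl
    · by_cases h : A a b
      · exact Or.inl (Relation.ReflTransGen.single h)
      · exact Or.inr (Relation.ReflTransGen.single
          ((hT.2 b a (Ne.symm hab)).mpr h))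
  obtain ⟨u, -, hu'⟩ := myExistsMin (Relation.ReflTransGen A)
    (fun _ => Relation.ReflTransGen.refl)
    (fun hab hbc => hab.trans hbc) htot Finset.univ Finset.univ_nonempty
  have hu : ∀ v, Relation.ReflTransGen A u v := fun v => hu' v (Finset.mem_univ v)
  -- a vertex different from u
  have hv' : ∃ v : V, v ≠ u := by
    by_contra h
    push_neg at h
    have : Fintype.card V ≤ 1 := Fintype.card_le_one_iff.mpr (fun a b => (h a).trans (h b).symm)
    omega
  obtain ⟨v₀, hv₀⟩ := hv'
  refine ⟨extT A u, ⟨?_, ?_⟩, fun a b => Iff.rfl, ?_, ?_⟩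
  · intro x
    cases x with
    | none => exact id
    | some a => exact hT.1 a
  · intro x y hxy
    cases x with
    | none =>
      cases y with
      | none => exact absurd rfl hxy
      | some b => exact (not_not (a := b = u)).symm
    | some a =>
      cases y with
      | none => exact Iff.rfl
      | some b => exact hT.2 a b (fun h => hxy (congrArg some h))
  · -- strong connectivity
    have lift : ∀ a b : V, Relation.ReflTransGen A a b →
        Relation.ReflTransGen (extT A u) (some a) (some b) := by
      intro a b h
      exact Relation.ReflTransGen.lift some (fun x y hxy => hxy) _ _ h
    have hwu : extT A u none (some u) := rfl
    have hto : ∀ x : Option V, Relation.ReflTransGen (extT A u) x none := by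
      intro x
      cases x with
      | none => exact Relation.ReflTransGen.refl
      | some a =>
        by_cases ha : a = u
        · subst ha
          exact (lift a v₀ (hu v₀)).trans (Relation.ReflTransGen.single hv₀)
        · exact Relation.ReflTransGen.single ha
    have hfrom : ∀ y : Option V, Relation.ReflTransGen (extT A u) none y := by
      intro y
      cases y with
      | none => exact Relation.ReflTransGen.refl
      | some b => exact (Relation.ReflTransGen.single hwu).trans (lift u b (hu b))
    intro x y
    exact (hto x).trans (hfrom y)
  · -- domination number
    have hub : (Option.some '' S).ncard = k ∧ Dom (extT A u) (Option.some '' S) := by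
      constructor
      · rw [Set.ncard_image_of_injective S (Option.some_injective V)]; exact hScard
      · intro x
        cases x with
        | some w =>
          rcases hSdom w with h | ⟨y, hy, hA⟩
          · exact Or.inl ⟨w, h, rfl⟩
          · exact Or.inr ⟨some y, ⟨y, hy, rfl⟩, hA⟩
        | none =>
          have hnsub : ¬ S ⊆ {u} := by
            intro h
            have := Set.ncard_le_ncard h (Set.finite_singleton u)
            rw [hScard, Set.ncard_singleton] at this
            omega
          obtain ⟨x, hxS, hxu⟩ := Set.not_subset.mp hnsub
          exact Or.inr ⟨some x, ⟨x, hxS, rfl⟩, by simpa [extT] using hxu⟩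
    have hlb : ∀ m ∈ {n | ∃ S' : Set (Option V), S'.ncard = n ∧ Dom (extT A u) S'},
        k ≤ m := by
      rintro m ⟨S', hS'card, hS'dom⟩
      set P : Set V := Option.some ⁻¹' S' with hP
      by_cases hn : none ∈ S'
      · have hdom0 : Dom A (insert u P) := by
          intro w
          rcases hS'dom (some w) with h | ⟨x, hx, hA⟩
          · exact Or.inl (Set.mem_insert_of_mem u h)
          · cases x with
            | some y => exact Or.inr ⟨y, Set.mem_insert_of_mem u hx, hA⟩
            | none =>
              have : w = u := hA
              exact Or.inl (this ▸ Set.mem_insert w P)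
        have h1 : k ≤ (insert u P).ncard := hlow _ hdom0
        have h2 : (insert u P).ncard ≤ P.ncard + 1 := Set.ncard_insert_le u P
        have h3 : insert none (Option.some '' P) ⊆ S' := by
          intro x hx
          rcases hx with rfl | ⟨y, hy, rfl⟩
          · exact hn
          · exact hy
        have h4 : (insert none (Option.some '' P)).ncard = P.ncard + 1 := by
          rw [Set.ncard_insert_of_notMem (by simp) (Set.toFinite _),
            Set.ncard_image_of_injective P (Option.some_injective V)]
        have h5 : (insert none (Option.some '' P)).ncard ≤ S'.ncard :=
          Set.ncard_le_ncard h3 (Set.toFinite _)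
        omega
      · have hdom0 : Dom A P := by
          intro w
          rcases hS'dom (some w) with h | ⟨x, hx, hA⟩
          · exact Or.inl h
          · cases x with
            | some y => exact Or.inr ⟨y, hx, hA⟩
            | none => exact absurd hx hn
        have h1 : k ≤ P.ncard := hlow _ hdom0
        have h3 : Option.some '' P ⊆ S' := by rintro x ⟨y, hy, rfl⟩; exact hy
        have h4 : (Option.some '' P).ncard = P.ncard :=
          Set.ncard_image_of_injective P (Option.some_injective V)
        have h5 : (Option.some '' P).ncard ≤ S'.ncard :=
          Set.ncard_le_ncard h3 (Set.toFinite _)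
        omega
    refine le_antisymm (Nat.sInf_le ⟨Option.some '' S, hub.1, hub.2⟩) (le_csInf ⟨k, Option.some '' S, hub.1, hub.2⟩ hlb)
end

section
/- If T is a locally-out-transitive tournament (the out-neighbourhood of every vertex induces a transitive subtournament) with γ(T) > 1, then γ(T) ≤ 3 and w(T) ≤ 3. -/
variable {V : Type*}

theorem stmt18 [Fintype V] (A : V → V → Prop) (hT : IsTournament A)
    (hlot : ∀ v a b c : V, A v a → A v b → A v c → A a b → A b c → A a c)
    (hγ : 1 < domNum A) :
    domNum A ≤ 3 ∧ watchman A ≤ 3 := by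
  classical
  obtain ⟨hirr, htot⟩ := hT
  -- Existence of a 3-cycle
  have hcyc : ∃ x y z : V, A x y ∧ A y z ∧ A z x := by
    by_contra h
    push_neg at h
    have hne : Nonempty V := by
      by_contra hV
      have hd : Dom A (∅ : Set V) := fun v => (hV ⟨v⟩).elim
      have h0 : (0 : ℕ) ∈ {n | ∃ S : Set V, S.ncard = n ∧ Dom A S} :=
        ⟨∅, by simp, hd⟩
      have := Nat.sInf_le h0
      unfold domNum at hγ
      omega
    obtain ⟨m, -, hm⟩ := Finset.exists_max_image Finset.univ
      (fun v => (Finset.univ.filter (fun w => A v w)).card)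
      ⟨Classical.arbitrary V, Finset.mem_univ _⟩
    have hdm : Dom A {m} := by
      intro v
      by_cases hv : v = m
      · exact Or.inl (by simp [hv])
      · refine Or.inr ⟨m, rfl, ?_⟩
        by_contra hmv
        have hvm : A v m := (htot v m hv).mpr hmv
        have hsub : (Finset.univ.filter (fun w => A m w)) ⊂
            (Finset.univ.filter (fun w => A v w)) := by
          constructor
          · intro w hw
            simp only [Finset.mem_filter, Finset.mem_univ, true_and] at hw ⊢
            by_contra hvw
            have hwv : w ≠ v := by rintro rfl; exact hmv hw
            have : A w v := (htot w v hwv).mpr hvw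
            exact h v m w hvm hw this
          · intro hsub'
            have : m ∈ Finset.univ.filter (fun w => A v w) := by
              simp [hvm]
            have := hsub' this
            simp only [Finset.mem_filter, Finset.mem_univ, true_and] at this
            exact hirr m this
        have := Finset.card_lt_card hsub
        have := hm v (Finset.mem_univ v)
        omega
    have h1 : (1 : ℕ) ∈ {n | ∃ S : Set V, S.ncard = n ∧ Dom A S} :=
      ⟨{m}, Set.ncard_singleton m, hdm⟩
    have := Nat.sInf_le h1
    unfold domNum at hγ
    omega
  obtain ⟨x, y, z, hxy, hyz, hzx⟩ := hcyc
  have hxz : x ≠ z := fun h => hirr x (h ▸ hzx)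
  -- Any 3-cycle dominates
  have hdom : Dom A {x, y, z} := by
    intro v
    by_cases hx : A x v
    · exact Or.inr ⟨x, by simp, hx⟩
    by_cases hy : A y v
    · exact Or.inr ⟨y, by simp, hy⟩
    by_cases hz : A z v
    · exact Or.inr ⟨z, by simp, hz⟩
    left
    by_contra hv
    simp only [Set.mem_insert_iff, Set.mem_singleton_iff, not_or] at hv
    obtain ⟨hvx, hvy, hvz⟩ := hv
    have hax : A v x := (htot v x hvx).mpr hx
    have hay : A v y := (htot v y hvy).mpr hy
    have haz : A v z := (htot v z hvz).mpr hz
    have : A x z := hlot v x y z hax hay haz hxy hyz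
    exact ((htot x z hxz).mp this) hzx
  constructor
  · -- domNum ≤ 3
    have hmem : ({x, y, z} : Set V).ncard ∈
        {n | ∃ S : Set V, S.ncard = n ∧ Dom A S} := ⟨{x, y, z}, rfl, hdom⟩
    refine le_trans (Nat.sInf_le hmem) ?_
    calc ({x, y, z} : Set V).ncard ≤ ({y, z} : Set V).ncard + 1 :=
          Set.ncard_insert_le _ _
      _ ≤ (({z} : Set V).ncard + 1) + 1 := by
          have := Set.ncard_insert_le y ({z} : Set V)
          omega
      _ ≤ 3 := by simp [Set.ncard_singleton]
  · -- watchman ≤ 3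
    have hmem : (3 : ℕ) ∈ {n | ∃ l : List V, IsCDW A l ∧ walkLength l = n} := by
      refine ⟨[x, y, z], ⟨⟨by simp, ?_, Or.inr ?_⟩, ?_⟩, by simp [walkLength]⟩
      · simp [List.Chain', List.isChain_cons_cons, hxy, hyz]
      · intro a b ha hb
        simp only [List.head?_cons, Option.some.injEq] at ha
        have hb' : b = z := by have h2 := hb; simp at h2; exact h2.symm
        subst ha; subst hb'
        exact hzx
      · have hset : {v | v ∈ [x, y, z]} = ({x, y, z} : Set V) := by
          ext w; simp [Set.mem_insert_iff]
        rw [hset]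
        exact hdom
    exact Nat.sInf_le hmem
end

section
/- If T is a locally-in-transitive tournament (the in-neighbourhood of every vertex induces a transitive subtournament) with γ(T) > 1, then γ(T) ≤ 3 and w(T) ≤ 3. -/
variable {V : Type*}

theorem stmt19 [Fintype V] (A : V → V → Prop) (hT : IsTournament A)
    (hlit : ∀ v a b c : V, A a v → A b v → A c v → A a b → A b c → A a c)
    (hγ : 1 < domNum A) :
    domNum A ≤ 3 ∧ watchman A ≤ 3 := by
  classical
  have hne : Nonempty V := by
    by_contra h
    rw [not_nonempty_iff] at h
    have h0 : domNum A = 0 := by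
      have : (0:ℕ) ∈ {n | ∃ S : Set V, S.ncard = n ∧ Dom A S} :=
        ⟨∅, by simp, fun v => (h.false v).elim⟩
      exact Nat.le_zero.mp (Nat.sInf_le this)
    omega
  obtain ⟨v⟩ := hne
  -- {v} is not dominating, so v has an in-neighbour
  have hsingle : ∀ x : V, ¬ Dom A {x} := by
    intro x hd
    have : domNum A ≤ 1 := Nat.sInf_le ⟨{x}, by simp, hd⟩
    omega
  have hin : ∀ x : V, ∃ u, A u x := by
    intro x
    have hv := hsingle x
    rw [Dom] at hv; push_neg at hv
    obtain ⟨w, hw1, hw2⟩ := hv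
    have hwx : w ≠ x := by simpa using hw1
    have hnxw : ¬ A x w := hw2 x rfl
    exact ⟨w, (hT.2 w x hwx).mpr (by
      intro hxw; exact hnxw hxw)⟩
  obtain ⟨u0, hu0v⟩ := hin v
  -- the in-neighbourhood of v, as a finset
  set N : Finset V := Finset.univ.filter (fun x => A x v) with hN
  have hNmem : ∀ x, x ∈ N ↔ A x v := by intro x; simp [hN]
  have hNne : N.Nonempty := ⟨u0, (hNmem u0).mpr hu0v⟩
  obtain ⟨m, hmN, hmmax⟩ :=
    N.exists_max_image (fun u => (N.filter (fun x => A u x)).card) hNne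
  have hmv : A m v := (hNmem m).mp hmN
  -- m beats every other in-neighbour of v
  have hmax : ∀ x, A x v → x ≠ m → A m x := by
    intro x hxv hxm
    by_contra hmx
    have hxm' : A x m := (hT.2 x m hxm).mpr hmx
    have hsub : N.filter (fun y => A m y) ⊂ N.filter (fun y => A x y) := by
      constructor
      · intro y hy
        rw [Finset.mem_filter] at hy ⊢
        exact ⟨hy.1, hlit v x m y hxv hmv ((hNmem y).mp hy.1) hxm' hy.2⟩
      · intro hcon
        have : m ∈ N.filter (fun y => A m y) := hcon (by
          rw [Finset.mem_filter]; exact ⟨hmN, hxm'⟩)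
        rw [Finset.mem_filter] at this
        exact hT.1 m this.2
    have := Finset.card_lt_card hsub
    have := hmmax x ((hNmem x).mpr hxv)
    omega
  have hmne : m ≠ v := by intro h; exact hT.1 v (h ▸ hmv)
  -- {v, m} dominates
  have hdom : Dom A {v, m} := by
    intro w
    by_cases hwv : w = v
    · left; simp [hwv]
    · by_cases hwm : w = m
      · left; simp [hwm]
      · by_cases hvw : A v w
        · right; exact ⟨v, by simp, hvw⟩
        · have hwv' : A w v := (hT.2 w v hwv).mpr hvw
          right; exact ⟨m, by simp, hmax w hwv' hwm⟩
  have hγ2 : domNum A ≤ 2 :=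
    Nat.sInf_le ⟨{v, m}, Set.ncard_pair hmne.symm, hdom⟩
  refine ⟨le_trans hγ2 (by norm_num), ?_⟩
  -- find z with A z m
  have hmv' : ¬ A v m := by
    intro h; exact hT.1 v (((hT.2 m v hmne).mp hmv) h).elim
  obtain ⟨z, hzm⟩ := hin m
  have hzm' : z ≠ m := by intro h; exact hT.1 m (h ▸ hzm)
  have hzv : z ≠ v := by intro h; exact hmv' (h ▸ hzm)
  have hvz : A v z := by
    by_contra hvz
    have hzv' : A z v := (hT.2 z v hzv).mpr hvz
    exact (hT.1 m) (((hT.2 z m hzm').mp hzm) (hmax z hzv' hzm')).elim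
  -- closed dominating walk z → m → v → z
  have hcdw : IsCDW A [z, m, v] := by
    refine ⟨⟨by simp, ?_, Or.inr ?_⟩, ?_⟩
    · simp [List.Chain', List.isChain_cons_cons, hzm, hmv]
    · intro a b ha hb
      simp at ha hb
      subst ha; subst hb
      exact hvz
    · intro w
      rcases hdom w with h | ⟨u, hu, huw⟩
      · left
        simp only [Set.mem_insert_iff, Set.mem_singleton_iff] at h
        rcases h with h | h <;> simp [h]
      · right
        refine ⟨u, ?_, huw⟩
        simp only [Set.mem_insert_iff, Set.mem_singleton_iff] at hu
        rcases hu with h | h <;> simp [h]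
  have : watchman A ≤ 3 := Nat.sInf_le ⟨[z, m, v], hcdw, by simp [walkLength]⟩
  exact this
end
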